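/- arXiv:2604.22735 — 5 statements merged into one kernel-verified Lean document; each statement's English description precedes it below -/
import Mathlib

section
/- The Lebesgue integral over the open simplex {(t₁, t₂, t₃) ∈ ℝ³ : 0 < t₁ < t₂ < t₃ < 1} of the function (t₁, t₂, t₃) ↦ 1/((1 − t₁) · t₂ · (t₃ − t₁)) is finite and equals 2 · ζ(3), where ζ(3) = ∑_{n ≥ 1} 1/n³. -/
open MeasureTheory Filter Finset

/-- The open simplex `0 < t₁ < t₂ < t₃ < 1` in `ℝ³`. -/
def openSimplex3 : Set (ℝ × ℝ × ℝ) :=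
  {t | 0 < t.1 ∧ t.1 < t.2.1 ∧ t.2.1 < t.2.2 ∧ t.2.2 < 1}


private lemma sum_range_sub_shift (f : ℕ → ℝ) (n M : ℕ) :
    ∑ m ∈ range M, (f m - f (m + n)) =
      ∑ j ∈ range n, f j - ∑ j ∈ range n, f (M + j) := by
  induction M with
  | zero => simp
  | succ M ih =>
    rw [Finset.sum_range_succ, ih]
    have h1 : ∑ j ∈ range n, (f (M + j + 1) - f (M + j)) = f (M + n) - f (M + 0) :=
      Finset.sum_range_sub (fun j => f (M + j)) n
    have h2 : ∑ j ∈ range n, (f (M + j + 1) - f (M + j)) =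
        ∑ j ∈ range n, f (M + 1 + j) - ∑ j ∈ range n, f (M + j) := by
      rw [Finset.sum_sub_distrib]
      congr 1
      exact Finset.sum_congr rfl fun j _ => by congr 1; omega
    rw [h2] at h1
    simp only [Nat.add_zero] at h1
    linarith

private lemma hasSum_telescope (f : ℕ → ℝ) (n : ℕ) (hmono : ∀ m, f (m + n) ≤ f m)
    (hf : Tendsto f atTop (nhds 0)) :
    HasSum (fun m => f m - f (m + n)) (∑ j ∈ range n, f j) := by
  rw [hasSum_iff_tendsto_nat_of_nonneg (fun m => sub_nonneg.2 (hmono m))]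
  simp only [sum_range_sub_shift]
  have h0 : Tendsto (fun M => ∑ j ∈ range n, f (M + j)) atTop (nhds 0) := by
    have : Tendsto (fun M => ∑ j ∈ range n, f (M + j)) atTop (nhds (∑ j ∈ range n, (0:ℝ))) := by
      refine tendsto_finset_sum _ fun j _ => ?_
      exact hf.comp (tendsto_add_atTop_nat j)
    simpa using this
  simpa using tendsto_const_nhds.sub h0

private lemma tendsto_one_div_shift (c : ℝ) (hc : 0 < c) :
    Tendsto (fun m : ℕ => 1 / ((m : ℝ) + c)) atTop (nhds 0) := by
  have h : Tendsto (fun m : ℕ => (m : ℝ) + c) atTop atTop :=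
    tendsto_atTop_add_const_right atTop c tendsto_natCast_atTop_atTop
  simpa [one_div, Function.comp_def] using tendsto_inv_atTop_zero.comp h

/-- `∑ₘ 1/((m+1)(m+1+N)) = H_N / N` for `N ≥ 1`. -/
private lemma hasSum_L2 (N : ℕ) (hN : 0 < N) :
    HasSum (fun m : ℕ => 1 / (((m : ℝ) + 1) * ((m : ℝ) + 1 + N)))
      ((∑ j ∈ range N, 1 / ((j : ℝ) + 1)) / N) := by
  have hf : Tendsto (fun m : ℕ => 1 / ((m : ℝ) + 1)) atTop (nhds 0) :=
    tendsto_one_div_shift 1 one_pos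
  have hmono : ∀ m : ℕ, 1 / ((m + N : ℕ) + 1 : ℝ) ≤ 1 / ((m : ℝ) + 1) := by
    intro m
    apply one_div_le_one_div_of_le (by positivity)
    push_cast; linarith [Nat.cast_nonneg (α := ℝ) N]
  have h := hasSum_telescope (fun m => 1 / ((m : ℝ) + 1)) N hmono hf
  have heq : ∀ m : ℕ, (1 / ((m : ℝ) + 1) - 1 / ((m + N : ℕ) + 1 : ℝ)) =
      (N : ℝ) * (1 / (((m : ℝ) + 1) * ((m : ℝ) + 1 + N))) := by
    intro m
    have h1 : ((m : ℝ) + 1) ≠ 0 := by positivity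
    have h2 : ((m : ℝ) + 1 + N) ≠ 0 := by positivity
    push_cast
    rw [mul_one_div, div_sub_div _ _ h1 (by positivity : ((m:ℝ) + N + 1) ≠ 0),
      div_eq_div_iff (by positivity) (mul_ne_zero h1 h2)]
    ring
  simp only [heq] at h
  have h3 := h.mul_left (1 / (N : ℝ))
  have hN' : (N : ℝ) ≠ 0 := Nat.cast_ne_zero.2 hN.ne'
  simp only [← mul_assoc, one_div, inv_mul_cancel₀ hN', one_mul] at h3
  simpa [one_div, div_eq_inv_mul] using h3

/-- `∑ₖ 1/((a+k+1)(a+k+2)) = 1/(a+1)`. -/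
private lemma hasSum_L3 (a : ℕ) :
    HasSum (fun k : ℕ => 1 / (((a : ℝ) + k + 1) * ((a : ℝ) + k + 2))) (1 / ((a : ℝ) + 1)) := by
  have hf : Tendsto (fun m : ℕ => 1 / ((m : ℝ) + (a + 1))) atTop (nhds 0) :=
    tendsto_one_div_shift _ (by positivity)
  have hmono : ∀ m : ℕ, 1 / (((m + 1 : ℕ) : ℝ) + (a + 1)) ≤ 1 / ((m : ℝ) + (a + 1)) := by
    intro m
    apply one_div_le_one_div_of_le (by positivity)
    push_cast; linarith
  have h := hasSum_telescope (fun m => 1 / ((m : ℝ) + (a + 1))) 1 hmono hf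
  simp only [Finset.sum_range_one, Nat.cast_zero, zero_add] at h
  have heq : ∀ m : ℕ, (1 / ((m : ℝ) + (a + 1)) - 1 / (((m + 1 : ℕ) : ℝ) + (a + 1))) =
      1 / (((a : ℝ) + m + 1) * ((a : ℝ) + m + 2)) := by
    intro m
    have h1 : ((a : ℝ) + m + 1) ≠ 0 := by positivity
    have h2 : ((a : ℝ) + m + 2) ≠ 0 := by positivity
    push_cast
    rw [div_sub_div _ _ (by positivity) (by positivity),
      div_eq_div_iff (by positivity) (mul_ne_zero h1 h2)]
    ring
  simp only [heq] at h
  exact h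

private noncomputable def Hr (n : ℕ) : ℝ := ∑ j ∈ range (n + 1), 1 / ((j : ℝ) + 1)

/-- Step A: reindexing the double sum along `n = m + k`. -/
private lemma stepA :
    ∑' p : ℕ × ℕ, ENNReal.ofReal (1 / (((p.1 : ℝ) + 1) * ((p.1 : ℝ) + p.2 + 1) ^ 2))
      = ∑' n : ℕ, ENNReal.ofReal (Hr n / ((n : ℝ) + 1) ^ 2) := by
  classical
  rw [ENNReal.tsum_prod']
  set F : ℕ → ℕ → ENNReal := fun m n =>
    if m ≤ n then ENNReal.ofReal (1 / (((m : ℝ) + 1) * ((n : ℝ) + 1) ^ 2)) else 0 with hF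
  have hmf : ∀ m : ℕ,
      (∑' k : ℕ, ENNReal.ofReal (1 / (((m : ℝ) + 1) * ((m : ℝ) + k + 1) ^ 2)))
        = ∑' n : ℕ, F m n := by
    intro m
    have hinj : Function.Injective (fun k : ℕ => m + k) := fun a b h => by
      simpa using h
    have hsupp : Function.support (F m) ⊆ Set.range fun k : ℕ => m + k := by
      intro n hn
      rcases le_or_gt m n with h | h
      · exact ⟨n - m, by simp; omega⟩
      · exact absurd (by simp [hF, not_le.2 h]) hn
    rw [← hinj.tsum_eq hsupp]
    refine tsum_congr fun k => ?_
    rw [hF]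
    simp only [le_add_iff_nonneg_right, Nat.zero_le, if_true]
    congr 2
    push_cast
    ring
  simp only [hmf]
  rw [ENNReal.tsum_comm]
  refine tsum_congr fun n => ?_
  rw [tsum_eq_sum (s := range (n + 1)) (fun m hm => by
    simp only [hF]; rw [if_neg (by simp at hm; omega)])]
  have : ∀ m ∈ range (n + 1), F m n = ENNReal.ofReal (1 / (((m : ℝ) + 1) * ((n : ℝ) + 1) ^ 2)) := by
    intro m hm
    simp only [hF]
    rw [if_pos (Nat.lt_succ_iff.1 (mem_range.1 hm))]
  rw [Finset.sum_congr rfl this, ← ENNReal.ofReal_sum_of_nonneg (fun m _ => by positivity)]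
  congr 1
  rw [Hr, Finset.sum_div]
  refine Finset.sum_congr rfl fun m _ => ?_
  rw [div_div]

private lemma summable_shift_pow (q : ℕ) (hq : 1 < q) :
    Summable (fun m : ℕ => 1 / ((m : ℝ) + 1) ^ q) := by
  have h : Summable (fun n : ℕ => 1 / (n : ℝ) ^ q) := Real.summable_one_div_nat_pow.2 hq
  have := (summable_nat_add_iff 1).2 h
  refine this.congr fun m => ?_
  push_cast
  ring

private lemma stepB :
    ∑' p : ℕ × ℕ, ENNReal.ofReal (1 / (((p.1 : ℝ) + 1) * ((p.2 : ℝ) + 1) * ((p.1 : ℝ) + p.2 + 2)))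
      = ∑' n : ℕ, ENNReal.ofReal (Hr n / ((n : ℝ) + 1) ^ 2) := by
  rw [ENNReal.tsum_prod', ENNReal.tsum_comm]
  refine tsum_congr fun j => ?_
  have h := (hasSum_L2 (j + 1) (Nat.succ_pos j)).mul_left (1 / ((j : ℝ) + 1))
  have h2 : HasSum (fun m : ℕ => 1 / (((m : ℝ) + 1) * ((j : ℝ) + 1) * ((m : ℝ) + j + 2)))
      (Hr j / ((j : ℝ) + 1) ^ 2) := by
    convert h using 1
    · rfl
    · funext m
      have h1 : ((m : ℝ) + 1) ≠ 0 := by positivity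
      have h3 : ((j : ℝ) + 1) ≠ 0 := by positivity
      have h4 : ((m : ℝ) + j + 2) ≠ 0 := by positivity
      push_cast
      field_simp
      ring
    · rw [Hr, sq]
      push_cast
      rw [mul_comm (1 / ((j : ℝ) + 1)), div_mul_div_comm, mul_one]
  rw [← ENNReal.ofReal_tsum_of_nonneg (fun m => by positivity) h2.summable, h2.tsum_eq]

private lemma stepC :
    ∑' p : ℕ × ℕ, ENNReal.ofReal (1 / (((p.1 : ℝ) + 1) * ((p.2 : ℝ) + 1) * ((p.1 : ℝ) + p.2 + 2)))
      = 2 * ∑' p : ℕ × ℕ, ENNReal.ofReal (1 / (((p.1 : ℝ) + 1) * ((p.1 : ℝ) + p.2 + 2) ^ 2)) := by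
  have hpt : ∀ p : ℕ × ℕ,
      ENNReal.ofReal (1 / (((p.1 : ℝ) + 1) * ((p.2 : ℝ) + 1) * ((p.1 : ℝ) + p.2 + 2)))
        = ENNReal.ofReal (1 / (((p.1 : ℝ) + 1) * ((p.1 : ℝ) + p.2 + 2) ^ 2))
          + ENNReal.ofReal (1 / (((p.2 : ℝ) + 1) * ((p.1 : ℝ) + p.2 + 2) ^ 2)) := by
    intro p
    rw [← ENNReal.ofReal_add (by positivity) (by positivity)]
    congr 1
    have h1 : ((p.1 : ℝ) + 1) ≠ 0 := by positivity
    have h2 : ((p.2 : ℝ) + 1) ≠ 0 := by positivity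
    have h3 : ((p.1 : ℝ) + p.2 + 2) ≠ 0 := by positivity
    field_simp
    ring
  rw [tsum_congr hpt, ENNReal.tsum_add]
  have hswap : ∑' p : ℕ × ℕ, ENNReal.ofReal (1 / (((p.2 : ℝ) + 1) * ((p.1 : ℝ) + p.2 + 2) ^ 2))
      = ∑' p : ℕ × ℕ, ENNReal.ofReal (1 / (((p.1 : ℝ) + 1) * ((p.1 : ℝ) + p.2 + 2) ^ 2)) := by
    have hc : ∀ p : ℕ × ℕ,
        ENNReal.ofReal (1 / (((p.2 : ℝ) + 1) * ((p.1 : ℝ) + p.2 + 2) ^ 2))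
          = (fun q : ℕ × ℕ => ENNReal.ofReal (1 / (((q.1 : ℝ) + 1) * ((q.1 : ℝ) + q.2 + 2) ^ 2)))
              ((Equiv.prodComm ℕ ℕ) p) := by
      intro p
      simp only [Equiv.prodComm_apply, Prod.fst_swap, Prod.snd_swap]
      congr 2
      ring
    rw [tsum_congr hc]
    exact (Equiv.prodComm ℕ ℕ).tsum_eq
      (fun q : ℕ × ℕ => ENNReal.ofReal (1 / (((q.1 : ℝ) + 1) * ((q.1 : ℝ) + q.2 + 2) ^ 2)))
  rw [hswap, two_mul]

private lemma stepD :
    ∑' p : ℕ × ℕ, ENNReal.ofReal (1 / (((p.1 : ℝ) + 1) * ((p.1 : ℝ) + p.2 + 1) ^ 2))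
      = (∑' n : ℕ, ENNReal.ofReal (1 / ((n : ℝ) + 1) ^ 3))
        + ∑' p : ℕ × ℕ, ENNReal.ofReal (1 / (((p.1 : ℝ) + 1) * ((p.1 : ℝ) + p.2 + 2) ^ 2)) := by
  rw [ENNReal.tsum_prod']
  have hsplit : ∀ m : ℕ,
      (∑' k : ℕ, ENNReal.ofReal (1 / (((m : ℝ) + 1) * ((m : ℝ) + k + 1) ^ 2)))
        = ENNReal.ofReal (1 / ((m : ℝ) + 1) ^ 3)
          + ∑' k : ℕ, ENNReal.ofReal (1 / (((m : ℝ) + 1) * ((m : ℝ) + k + 2) ^ 2)) := by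
    intro m
    rw [tsum_eq_zero_add' ENNReal.summable]
    congr 1
    · congr 1
      push_cast
      ring
    · refine tsum_congr fun k => ?_
      congr 2
      push_cast
      ring
  rw [tsum_congr hsplit, ENNReal.tsum_add]
  congr 1
  exact (ENNReal.tsum_prod'
    (f := fun p : ℕ × ℕ => ENNReal.ofReal (1 / (((p.1 : ℝ) + 1) * ((p.1 : ℝ) + p.2 + 2) ^ 2)))).symm

private lemma stepE :
    (∑' p : ℕ × ℕ, ENNReal.ofReal (1 / (((p.1 : ℝ) + 1) * ((p.1 : ℝ) + p.2 + 2) ^ 2))) ≠ ⊤ := by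
  have hb : ∀ p : ℕ × ℕ,
      ENNReal.ofReal (1 / (((p.1 : ℝ) + 1) * ((p.1 : ℝ) + p.2 + 2) ^ 2))
        ≤ ENNReal.ofReal ((1 / ((p.1 : ℝ) + 1))
            * (1 / (((p.1 : ℝ) + p.2 + 1) * ((p.1 : ℝ) + p.2 + 2)))) := by
    intro p
    apply ENNReal.ofReal_le_ofReal
    rw [one_div_mul_one_div]
    apply one_div_le_one_div_of_le (by positivity)
    have hp1 : (0 : ℝ) ≤ (p.1 : ℝ) + 1 := by positivity
    nlinarith [Nat.cast_nonneg (α := ℝ) p.1, Nat.cast_nonneg (α := ℝ) p.2]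
  refine ne_top_of_le_ne_top ?_ (ENNReal.tsum_le_tsum hb)
  rw [ENNReal.tsum_prod']
  have hrow : ∀ m : ℕ,
      (∑' k : ℕ, ENNReal.ofReal ((1 / ((m : ℝ) + 1))
          * (1 / (((m : ℝ) + k + 1) * ((m : ℝ) + k + 2)))))
        = ENNReal.ofReal (1 / ((m : ℝ) + 1) ^ 2) := by
    intro m
    have h := (hasSum_L3 m).mul_left (1 / ((m : ℝ) + 1))
    rw [← ENNReal.ofReal_tsum_of_nonneg (fun k => by positivity) h.summable, h.tsum_eq]
    congr 1
    rw [one_div_mul_one_div]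
    congr 1
    ring
  rw [tsum_congr hrow,
    ← ENNReal.ofReal_tsum_of_nonneg (fun m => by positivity) (summable_shift_pow 2 one_lt_two)]
  exact ENNReal.ofReal_lt_top.ne

private lemma euler :
    ∑' p : ℕ × ℕ, ENNReal.ofReal (1 / (((p.1 : ℝ) + 1) * ((p.1 : ℝ) + p.2 + 1) ^ 2))
      = 2 * ∑' n : ℕ, ENNReal.ofReal (1 / ((n : ℝ) + 1) ^ 3) := by
  have hST : ∑' p : ℕ × ℕ, ENNReal.ofReal (1 / (((p.1 : ℝ) + 1) * ((p.1 : ℝ) + p.2 + 1) ^ 2))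
      = 2 * ∑' p : ℕ × ℕ, ENNReal.ofReal (1 / (((p.1 : ℝ) + 1) * ((p.1 : ℝ) + p.2 + 2) ^ 2)) := by
    rw [stepA, ← stepB, stepC]
  have h2 : (∑' n : ℕ, ENNReal.ofReal (1 / ((n : ℝ) + 1) ^ 3))
      + (∑' p : ℕ × ℕ, ENNReal.ofReal (1 / (((p.1 : ℝ) + 1) * ((p.1 : ℝ) + p.2 + 2) ^ 2)))
      = (∑' p : ℕ × ℕ, ENNReal.ofReal (1 / (((p.1 : ℝ) + 1) * ((p.1 : ℝ) + p.2 + 2) ^ 2)))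
      + (∑' p : ℕ × ℕ, ENNReal.ofReal (1 / (((p.1 : ℝ) + 1) * ((p.1 : ℝ) + p.2 + 2) ^ 2))) := by
    rw [← stepD, hST, two_mul]
  have hz : (∑' n : ℕ, ENNReal.ofReal (1 / ((n : ℝ) + 1) ^ 3))
      = ∑' p : ℕ × ℕ, ENNReal.ofReal (1 / (((p.1 : ℝ) + 1) * ((p.1 : ℝ) + p.2 + 2) ^ 2)) :=
    (ENNReal.add_left_inj stepE).1 h2
  rw [stepD, ← hz, two_mul]

private lemma measurableSet_openSimplex3 : MeasurableSet openSimplex3 := by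
  have h1 : Measurable fun t : ℝ × ℝ × ℝ => t.1 := measurable_fst
  have h2 : Measurable fun t : ℝ × ℝ × ℝ => t.2.1 := measurable_fst.comp measurable_snd
  have h3 : Measurable fun t : ℝ × ℝ × ℝ => t.2.2 := measurable_snd.comp measurable_snd
  exact (measurableSet_lt measurable_const h1).inter ((measurableSet_lt h1 h2).inter
    ((measurableSet_lt h2 h3).inter (measurableSet_lt h3 measurable_const)))

private lemma lint_pow (c : ℝ) (hc : 0 ≤ c) (n : ℕ) :
    ∫⁻ x in Set.Ioo (0:ℝ) c, ENNReal.ofReal (x ^ n)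
      = ENNReal.ofReal (c ^ (n + 1) / ((n : ℝ) + 1)) := by
  rw [Measure.restrict_congr_set Ioo_ae_eq_Ioc]
  rw [← ofReal_integral_eq_lintegral_ofReal
    ((intervalIntegral.intervalIntegrable_pow n (μ := volume) (a := 0) (b := c)).1)
    ((ae_restrict_iff' measurableSet_Ioc).2 (ae_of_all _ fun x hx => pow_nonneg hx.1.le n))]
  congr 1
  rw [← intervalIntegral.integral_of_le hc, integral_pow]
  simp

private lemma lint_simplex (g : ℝ × ℝ × ℝ → ENNReal) (hg : Measurable g) :
    ∫⁻ t in openSimplex3, g t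
      = ∫⁻ z in Set.Ioo (0:ℝ) 1, ∫⁻ y in Set.Ioo (0:ℝ) z, ∫⁻ x in Set.Ioo (0:ℝ) y,
          g (x, y, z) := by
  have hS := measurableSet_openSimplex3
  set Q : Set (ℝ × ℝ) := {y | 0 < y.1 ∧ y.1 < y.2 ∧ y.2 < 1} with hQdef
  have hQ : MeasurableSet Q := by
    exact (measurableSet_lt measurable_const measurable_fst).inter
      ((measurableSet_lt measurable_fst measurable_snd).inter
        (measurableSet_lt measurable_snd measurable_const))
  -- the inner function
  set k : ℝ × (ℝ × ℝ) → ENNReal :=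
    ({p : ℝ × (ℝ × ℝ) | 0 < p.1 ∧ p.1 < p.2.1}.indicator g) with hkdef
  have hkm : Measurable k := hg.indicator
    ((measurableSet_lt measurable_const measurable_fst).inter
      (measurableSet_lt measurable_fst (measurable_fst.comp measurable_snd)))
  have hmem : ∀ x : ℝ, ∀ y : ℝ × ℝ, ((x, y) ∈ openSimplex3 ↔ y ∈ Q ∧ x ∈ Set.Ioo 0 y.1) := by
    intro x y
    constructor
    · rintro ⟨a, b, c, d⟩
      exact ⟨⟨lt_trans a b, c, d⟩, a, b⟩
    · rintro ⟨⟨a, b, c⟩, d, e⟩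
      exact ⟨d, e, b, c⟩
  rw [← lintegral_indicator hS, Measure.volume_eq_prod,
    lintegral_prod_symm _ (hg.indicator hS).aemeasurable]
  have h1 : ∀ y : ℝ × ℝ, (∫⁻ x : ℝ, openSimplex3.indicator g (x, y))
      = Q.indicator (fun y => ∫⁻ x in Set.Ioo (0:ℝ) y.1, g (x, y)) y := by
    intro y
    by_cases hy : y ∈ Q
    · rw [Set.indicator_of_mem hy, ← lintegral_indicator measurableSet_Ioo]
      refine lintegral_congr fun x => ?_
      by_cases hx : x ∈ Set.Ioo (0:ℝ) y.1
      · rw [Set.indicator_of_mem hx, Set.indicator_of_mem ((hmem x y).2 ⟨hy, hx⟩)]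
      · rw [Set.indicator_of_notMem hx,
          Set.indicator_of_notMem (fun hmem' => hx ((hmem x y).1 hmem').2)]
    · have : ∀ x : ℝ, openSimplex3.indicator g (x, y) = 0 := fun x =>
        Set.indicator_of_notMem (fun hmem' => hy ((hmem x y).1 hmem').1) _
      simp only [this, lintegral_zero, Set.indicator_of_notMem hy]
  rw [lintegral_congr h1, lintegral_indicator hQ]
  -- now over Q ⊆ ℝ × ℝ
  have hh : Measurable fun y : ℝ × ℝ => ∫⁻ x in Set.Ioo (0:ℝ) y.1, g (x, y) := by
    have : ∀ y : ℝ × ℝ, (∫⁻ x in Set.Ioo (0:ℝ) y.1, g (x, y)) = ∫⁻ x : ℝ, k (x, y) := by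
      intro y
      rw [← lintegral_indicator measurableSet_Ioo]
      refine lintegral_congr fun x => ?_
      by_cases hx : x ∈ Set.Ioo (0:ℝ) y.1
      · rw [Set.indicator_of_mem hx, hkdef,
          Set.indicator_of_mem (show (x, y) ∈ {p : ℝ × (ℝ × ℝ) | 0 < p.1 ∧ p.1 < p.2.1} from
            ⟨hx.1, hx.2⟩)]
      · rw [Set.indicator_of_notMem hx, hkdef,
          Set.indicator_of_notMem
            (fun h : (x, y) ∈ {p : ℝ × (ℝ × ℝ) | 0 < p.1 ∧ p.1 < p.2.1} => hx ⟨h.1, h.2⟩)]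
    simp only [this]
    exact Measurable.lintegral_prod_left (f := fun x y => k (x, y)) hkm
  rw [← lintegral_indicator hQ, Measure.volume_eq_prod,
    lintegral_prod_symm _ (hh.indicator hQ).aemeasurable]
  have h2 : ∀ z : ℝ, (∫⁻ w : ℝ, Q.indicator (fun y => ∫⁻ x in Set.Ioo (0:ℝ) y.1, g (x, y)) (w, z))
      = (Set.Ioo (0:ℝ) 1).indicator
          (fun z => ∫⁻ w in Set.Ioo (0:ℝ) z, ∫⁻ x in Set.Ioo (0:ℝ) w, g (x, w, z)) z := by
    intro z
    by_cases hz : z ∈ Set.Ioo (0:ℝ) 1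
    · rw [Set.indicator_of_mem hz, ← lintegral_indicator measurableSet_Ioo]
      refine lintegral_congr fun w => ?_
      by_cases hw : w ∈ Set.Ioo (0:ℝ) z
      · rw [Set.indicator_of_mem hw, Set.indicator_of_mem (show (w, z) ∈ Q from ⟨hw.1, hw.2, hz.2⟩)]
      · rw [Set.indicator_of_notMem hw,
          Set.indicator_of_notMem (fun h : (w, z) ∈ Q => hw ⟨h.1, h.2.1⟩)]
    · have hz' : ∀ w : ℝ, (w, z) ∉ Q := by
        intro w hw
        exact hz ⟨lt_trans hw.1 hw.2.1, hw.2.2⟩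
      simp only [Set.indicator_of_notMem (hz' _), lintegral_zero,
        Set.indicator_of_notMem hz]
  rw [lintegral_congr h2, lintegral_indicator measurableSet_Ioo]

private lemma meas_term (m k : ℕ) :
    Measurable fun t : ℝ × ℝ × ℝ =>
      ENNReal.ofReal (t.1 ^ (m + k) / (t.2.1 * t.2.2 ^ (k + 1))) := by
  apply Measurable.ennreal_ofReal
  exact (measurable_fst.pow_const _).div
    (((measurable_fst.comp measurable_snd)).mul ((measurable_snd.comp measurable_snd).pow_const _))

private lemma term_eval (m k : ℕ) :
    ∫⁻ t in openSimplex3, ENNReal.ofReal (t.1 ^ (m + k) / (t.2.1 * t.2.2 ^ (k + 1)))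
      = ENNReal.ofReal (1 / (((m : ℝ) + 1) * ((m : ℝ) + k + 1) ^ 2)) := by
  rw [lint_simplex _ (meas_term m k)]
  have inner2 : ∀ z ∈ Set.Ioo (0:ℝ) 1,
      (∫⁻ y in Set.Ioo (0:ℝ) z, ∫⁻ x in Set.Ioo (0:ℝ) y,
          ENNReal.ofReal (x ^ (m + k) / (y * z ^ (k + 1))))
        = ENNReal.ofReal (z ^ m) * ENNReal.ofReal (1 / (((m + k : ℕ) : ℝ) + 1) ^ 2) := by
    intro z hz
    have hz0 : (0:ℝ) < z := hz.1
    have inner1 : ∀ y ∈ Set.Ioo (0:ℝ) z,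
        (∫⁻ x in Set.Ioo (0:ℝ) y, ENNReal.ofReal (x ^ (m + k) / (y * z ^ (k + 1))))
          = ENNReal.ofReal (y ^ (m + k))
              * ENNReal.ofReal (1 / ((((m + k : ℕ) : ℝ) + 1) * z ^ (k + 1))) := by
      intro y hy
      have hy0 : (0:ℝ) < y := hy.1
      have step1 : (∫⁻ x in Set.Ioo (0:ℝ) y, ENNReal.ofReal (x ^ (m + k) / (y * z ^ (k + 1))))
          = ∫⁻ x in Set.Ioo (0:ℝ) y,
              ENNReal.ofReal (x ^ (m + k)) * ENNReal.ofReal (1 / (y * z ^ (k + 1))) := by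
        refine setLIntegral_congr_fun measurableSet_Ioo (fun x hx => ?_)
        rw [← ENNReal.ofReal_mul (pow_nonneg hx.1.le _), mul_one_div]
      rw [step1, lintegral_mul_const _ (measurable_id'.pow_const _).ennreal_ofReal,
        lint_pow y hy0.le (m + k), ← ENNReal.ofReal_mul (by positivity),
        ← ENNReal.ofReal_mul (pow_nonneg hy0.le _)]
      congr 1
      have h1 : ((m + k : ℕ) : ℝ) + 1 ≠ 0 := by positivity
      have h2 : z ^ (k + 1) ≠ 0 := by positivity
      field_simp
      ring
    rw [setLIntegral_congr_fun measurableSet_Ioo inner1,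
      lintegral_mul_const _ (measurable_id'.pow_const _).ennreal_ofReal,
      lint_pow z hz0.le (m + k), ← ENNReal.ofReal_mul (by positivity),
      ← ENNReal.ofReal_mul (pow_nonneg hz0.le _)]
    congr 1
    have h1 : ((m + k : ℕ) : ℝ) + 1 ≠ 0 := by positivity
    have h2 : z ^ (k + 1) ≠ 0 := by positivity
    field_simp
    ring
  rw [setLIntegral_congr_fun measurableSet_Ioo inner2,
    lintegral_mul_const _ (measurable_id'.pow_const _).ennreal_ofReal,
    lint_pow 1 zero_le_one m, ← ENNReal.ofReal_mul (by positivity)]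
  congr 1
  have h1 : ((m : ℝ) + 1) ≠ 0 := by positivity
  have h2 : ((m : ℝ) + k + 1) ≠ 0 := by positivity
  rw [one_pow]
  push_cast
  field_simp

private lemma expand (t : ℝ × ℝ × ℝ) (ht : t ∈ openSimplex3) :
    ENNReal.ofReal (1 / ((1 - t.1) * t.2.1 * (t.2.2 - t.1)))
      = ∑' p : ℕ × ℕ, ENNReal.ofReal (t.1 ^ (p.1 + p.2) / (t.2.1 * t.2.2 ^ (p.2 + 1))) := by
  obtain ⟨h1, h2, h3, h4⟩ := ht
  set x := t.1 with hx
  set y := t.2.1 with hy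
  set z := t.2.2 with hz
  have hy0 : (0:ℝ) < y := lt_trans h1 h2
  have hz0 : (0:ℝ) < z := lt_trans hy0 h3
  have hx1 : x < 1 := lt_trans (lt_trans h2 h3) h4
  have hxz : x < z := lt_trans h2 h3
  have hzx : (0:ℝ) < z - x := sub_pos.2 hxz
  have h1x : (0:ℝ) < 1 - x := sub_pos.2 hx1
  have hgeo2 : HasSum (fun j : ℕ => (x / z) ^ j) (1 - x / z)⁻¹ :=
    hasSum_geometric_of_lt_one (div_nonneg h1.le hz0.le) ((div_lt_one hz0).2 hxz)
  have hksum : ∀ m : ℕ, HasSum (fun j : ℕ => x ^ (m + j) / (y * z ^ (j + 1)))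
      (x ^ m * ((1 / y) * (1 / (z - x)))) := by
    intro m
    have h := (hgeo2.mul_right (1 / z)).mul_left (x ^ m * (1 / y))
    have he1 : ((1:ℝ) - x / z)⁻¹ * (1 / z) = 1 / (z - x) := by
      rw [show (1:ℝ) - x / z = (z - x) / z by field_simp, inv_div, div_mul_div_comm, mul_one,
        mul_comm (z - x) z, div_mul_eq_div_div, div_self hz0.ne']
    have hval : x ^ m * (1 / y) * ((1 - x / z)⁻¹ * (1 / z))
        = x ^ m * ((1 / y) * (1 / (z - x))) := by
      linear_combination (x ^ m * (1 / y)) * he1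
    rw [hval] at h
    refine h.congr_fun fun j => ?_
    have hyne : y ≠ 0 := hy0.ne'
    have hzne : z ≠ 0 := hz0.ne'
    rw [div_pow, pow_add]
    field_simp
    exact (pow_succ z j).symm
  have hmsum : HasSum (fun m : ℕ => x ^ m * ((1 / y) * (1 / (z - x))))
      (1 / ((1 - x) * y * (z - x))) := by
    have h := (hasSum_geometric_of_lt_one h1.le hx1).mul_right ((1 / y) * (1 / (z - x)))
    have hval : (1 - x)⁻¹ * ((1 / y) * (1 / (z - x))) = 1 / ((1 - x) * y * (z - x)) := by
      field_simp
    rwa [hval] at h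
  rw [← hmsum.tsum_eq,
    ENNReal.ofReal_tsum_of_nonneg (fun m => by positivity) hmsum.summable,
    ENNReal.tsum_prod']
  refine tsum_congr fun m => ?_
  rw [← (hksum m).tsum_eq,
    ENNReal.ofReal_tsum_of_nonneg (fun j => by positivity) (hksum m).summable]

private lemma hpos_simplex : ∀ t ∈ openSimplex3,
    0 < 1 / ((1 - t.1) * t.2.1 * (t.2.2 - t.1)) := by
  rintro t ⟨h1, h2, h3, h4⟩
  have hy0 : (0:ℝ) < t.2.1 := lt_trans h1 h2
  have hx1 : t.1 < 1 := lt_trans (lt_trans h2 h3) h4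
  have hxz : t.1 < t.2.2 := lt_trans h2 h3
  have : 0 < (1 - t.1) * t.2.1 * (t.2.2 - t.1) :=
    mul_pos (mul_pos (by linarith) hy0) (by linarith)
  positivity

private lemma hfm_simplex :
    Measurable fun t : ℝ × ℝ × ℝ => 1 / ((1 - t.1) * t.2.1 * (t.2.2 - t.1)) := by
  apply Measurable.div measurable_const
  exact ((measurable_const.sub measurable_fst).mul
    (measurable_fst.comp measurable_snd)).mul
    ((measurable_snd.comp measurable_snd).sub measurable_fst)

set_option maxHeartbeats 2000000 in
private lemma hmain_simplex :
    ∫⁻ t in openSimplex3, ENNReal.ofReal (1 / ((1 - t.1) * t.2.1 * (t.2.2 - t.1)))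
      = 2 * ∑' n : ℕ, ENNReal.ofReal (1 / ((n : ℝ) + 1) ^ 3) := by
  rw [setLIntegral_congr_fun measurableSet_openSimplex3 expand]
  rw [lintegral_tsum (fun p : ℕ × ℕ => ((meas_term p.1 p.2).aemeasurable).restrict)]
  rw [tsum_congr (fun p : ℕ × ℕ => term_eval p.1 p.2), euler]

/-- The Lebesgue integral over `{0 < t₁ < t₂ < t₃ < 1}` of
`1/((1 − t₁)·t₂·(t₃ − t₁))` is finite and equals `2·ζ(3)`. -/
theorem integral_I1_eq_two_zeta_three :
    IntegrableOn (fun t : ℝ × ℝ × ℝ => 1 / ((1 - t.1) * t.2.1 * (t.2.2 - t.1)))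
      openSimplex3 ∧
    ∫ t in openSimplex3, 1 / ((1 - t.1) * t.2.1 * (t.2.2 - t.1)) =
      2 * ∑' n : ℕ, 1 / ((n : ℝ) + 1) ^ 3 := by
  have hS := measurableSet_openSimplex3
  have hZ : ∑' n : ℕ, ENNReal.ofReal (1 / ((n : ℝ) + 1) ^ 3)
      = ENNReal.ofReal (∑' n : ℕ, 1 / ((n : ℝ) + 1) ^ 3) :=
    (ENNReal.ofReal_tsum_of_nonneg (fun n => by positivity)
      (summable_shift_pow 3 (by norm_num))).symm
  have hnn : 0 ≤ᵐ[volume.restrict openSimplex3]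
      fun t : ℝ × ℝ × ℝ => 1 / ((1 - t.1) * t.2.1 * (t.2.2 - t.1)) :=
    (ae_restrict_iff' hS).2 (ae_of_all _ fun t ht => (hpos_simplex t ht).le)
  have hfin : (∫⁻ t in openSimplex3,
      ENNReal.ofReal (1 / ((1 - t.1) * t.2.1 * (t.2.2 - t.1)))) < ⊤ := by
    rw [hmain_simplex, hZ]
    exact ENNReal.mul_lt_top (by norm_num) ENNReal.ofReal_lt_top
  have hint : IntegrableOn
      (fun t : ℝ × ℝ × ℝ => 1 / ((1 - t.1) * t.2.1 * (t.2.2 - t.1))) openSimplex3 := by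
    constructor
    · exact hfm_simplex.aestronglyMeasurable.restrict
    · rw [hasFiniteIntegral_iff_ofReal hnn]
      exact hfin
  refine ⟨hint, ?_⟩
  rw [integral_eq_lintegral_of_nonneg_ae hnn hfm_simplex.aestronglyMeasurable.restrict,
    hmain_simplex, hZ]
  rw [ENNReal.toReal_mul, ENNReal.toReal_ofReal (tsum_nonneg fun n => by positivity)]
  norm_num
end

section
/- Let G be a finite connected simple graph with edge set E, fixed orientation, incidence matrix B, h = |E| − |V| + 1, and a cycle basis matrix C, and let Λ_G(x) = Cᵀ · diagonal(x) · C be the associated graph Laplacian. Then for every x : E → ℝ, det Λ_G(x) = Ψ_G(x), the Kirchhoff graph polynomial of G evaluated at x. -/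
open scoped Classical

/-- The Kirchhoff graph polynomial: the sum over spanning trees `T` of `G` of the
product of `x e` over all edges `e` of `G` not in `T`. -/
noncomputable def kirchhoff {V : Type*} [Fintype V] (G : SimpleGraph V)
    (x : G.edgeSet → ℝ) : ℝ :=
  ∑ T ∈ Finset.univ.filter (fun T : SimpleGraph V => T ≤ G ∧ T.IsTree),
    ∏ e : G.edgeSet, if (e : Sym2 V) ∈ T.edgeSet then 1 else x e

/-- The incidence matrix of an oriented graph with source map `src` and
target map `tgt`. -/
noncomputable def incidence {V : Type*} [Fintype V] (G : SimpleGraph V)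
    (src tgt : G.edgeSet → V) : Matrix V G.edgeSet ℤ :=
  fun v e => (if v = tgt e then 1 else 0) - (if v = src e then 1 else 0)

/-- The graph Laplacian `Λ_G(x) = Cᵀ · diagonal(x) · C` associated to a cycle
basis matrix `C`. -/
noncomputable def graphLap {E : Type*} [Fintype E] {h : ℕ}
    (C : Matrix E (Fin h) ℤ) (x : E → ℝ) : Matrix (Fin h) (Fin h) ℝ :=
  (C.map (Int.cast : ℤ → ℝ)).transpose * Matrix.diagonal x * C.map (Int.cast : ℤ → ℝ)

open Finset Matrix

/-- Auxiliary copy of the incidence matrix, used in the auxiliary lemmas below. -/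
noncomputable def incidence' {V : Type*} [Fintype V] (G : SimpleGraph V)
    (src tgt : G.edgeSet → V) : Matrix V G.edgeSet ℤ :=
  fun v e => (if v = tgt e then 1 else 0) - (if v = src e then 1 else 0)

section CauchyBinet

variable {α R : Type*} [Fintype α] [DecidableEq α] [CommRing R] {h : ℕ}

theorem det_sum_apply (A B : Matrix α (Fin h) R) :
    (Aᵀ * B).det = ∑ f : Fin h → α,
      (A.submatrix f id).det * ∏ i, B (f i) i := by
  rw [Matrix.det_apply]
  simp only [Matrix.mul_apply, Matrix.transpose_apply]
  calc ∑ σ : Equiv.Perm (Fin h), Equiv.Perm.sign σ • ∏ i, ∑ e, A e (σ i) * B e i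
      = ∑ σ : Equiv.Perm (Fin h), Equiv.Perm.sign σ •
          ∑ f ∈ Fintype.piFinset (fun _ : Fin h => (univ : Finset α)),
            ∏ i, (A (f i) (σ i) * B (f i) i) := by
        simp_rw [Finset.prod_univ_sum]
    _ = ∑ f : Fin h → α, ∑ σ : Equiv.Perm (Fin h), Equiv.Perm.sign σ •
          ((∏ i, A (f i) (σ i)) * ∏ i, B (f i) i) := by
        simp_rw [Fintype.piFinset_univ, Finset.smul_sum, Finset.prod_mul_distrib]
        rw [Finset.sum_comm]
    _ = ∑ f : Fin h → α, (A.submatrix f id).det * ∏ i, B (f i) i := by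
        refine Finset.sum_congr rfl fun f _ => ?_
        rw [← Matrix.det_transpose (A.submatrix f id), Matrix.det_apply]
        rw [Finset.sum_mul]
        refine Finset.sum_congr rfl fun σ _ => ?_
        simp only [Matrix.transpose_apply, Matrix.submatrix_apply, id_eq]
        rw [smul_mul_assoc]

theorem cauchy_binet (A B : Matrix α (Fin h) R)
    (g : ∀ S : Finset α, S.card = h → (Fin h → α))
    (hginj : ∀ S hS, Function.Injective (g S hS))
    (hgmem : ∀ S hS i, g S hS i ∈ S) :
    (Aᵀ * B).det = ∑ S ∈ (univ : Finset α).powersetCard h,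
      if hS : S.card = h then
        (A.submatrix (g S hS) id).det * (B.submatrix (g S hS) id).det
      else 0 := by
  classical
  rw [det_sum_apply]
  have hzero : ∀ f : Fin h → α, ¬ Function.Injective f →
      (A.submatrix f id).det * ∏ i, B (f i) i = 0 := by
    intro f hf
    simp only [Function.Injective, not_forall] at hf
    obtain ⟨i, j, hij, hne⟩ := hf
    rw [Matrix.det_zero_of_row_eq hne, zero_mul]
    funext k; simp [Matrix.submatrix_apply, hij]
  rw [← Finset.sum_filter_of_ne (p := fun f => Function.Injective f)
    (by intro f _ hne; by_contra hf; exact hne (hzero f hf))]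
  rw [← Finset.sum_fiberwise_of_maps_to
      (g := fun f : Fin h → α => Finset.image f univ)
      (t := (univ : Finset α).powersetCard h)
      (by intro f hf
          rw [Finset.mem_filter] at hf
          rw [Finset.mem_powersetCard]
          exact ⟨Finset.subset_univ _,
            by rw [Finset.card_image_of_injective _ hf.2]; simp⟩)]
  refine Finset.sum_congr rfl fun S hS => ?_
  rw [Finset.mem_powersetCard] at hS
  rw [dif_pos hS.2]
  set gS := g S hS.2 with hgS
  have hrange : Finset.image gS univ = S := by
    apply Finset.eq_of_subset_of_card_le
    · intro a ha; rw [Finset.mem_image] at ha; obtain ⟨i, _, rfl⟩ := ha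
      exact hgmem S hS.2 i
    · rw [Finset.card_image_of_injective _ (hginj S hS.2), hS.2]; simp
  have hcardS : Fintype.card {x // x ∈ S} = h := by
    rw [Fintype.card_coe, hS.2]
  let gE : Fin h ≃ {x // x ∈ S} :=
    Equiv.ofBijective (fun i => ⟨gS i, hgmem S hS.2 i⟩)
      ((Fintype.bijective_iff_injective_and_card _).2
        ⟨fun i j hij => hginj S hS.2 (Subtype.ext_iff.1 hij), by simp [hcardS]⟩)
  rw [Finset.filter_filter]
  have key : ∑ f ∈ Finset.filter
        (fun f : Fin h → α => Function.Injective f ∧ Finset.image f univ = S) univ,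
        (A.submatrix f id).det * ∏ i, B (f i) i
      = ∑ σ : Equiv.Perm (Fin h),
        (A.submatrix (gS ∘ σ) id).det * ∏ i, B (gS (σ i)) i := by
    refine (Finset.sum_bij (fun (σ : Equiv.Perm (Fin h)) _ => gS ∘ σ) ?_ ?_ ?_ ?_).symm
    · intro σ _
      rw [Finset.mem_filter]
      refine ⟨Finset.mem_univ _, (hginj S hS.2).comp σ.injective, ?_⟩
      rw [show Finset.image (gS ∘ σ) univ = Finset.image gS (Finset.image σ univ) by
        rw [Finset.image_image], ← hrange]
      congr 1
      exact Finset.image_univ_equiv σ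
    · intro σ _ σ' _ hcomp
      exact Equiv.ext fun i => hginj S hS.2 (congrFun hcomp i)
    · intro f hf
      rw [Finset.mem_filter] at hf
      let fE : Fin h ≃ {x // x ∈ S} :=
        Equiv.ofBijective (fun i => ⟨f i, by
            rw [← hf.2.2]; exact Finset.mem_image_of_mem f (Finset.mem_univ i)⟩)
          ((Fintype.bijective_iff_injective_and_card _).2
            ⟨fun i j hij => hf.2.1 (Subtype.ext_iff.1 hij), by simp [hcardS]⟩)
      refine ⟨fE.trans gE.symm, Finset.mem_univ _, ?_⟩
      funext i
      simp only [Equiv.trans_apply, Function.comp_apply]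
      exact congrArg Subtype.val (gE.apply_symm_apply (fE i))
    · intro σ _; rfl
  rw [key]
  have h1 : ∀ σ : Equiv.Perm (Fin h), (A.submatrix (gS ∘ σ) id).det
      = Equiv.Perm.sign σ • (A.submatrix gS id).det := by
    intro σ
    have : A.submatrix (gS ∘ σ) id = (A.submatrix gS id).submatrix σ id := by
      funext i j; rfl
    rw [this, Matrix.det_permute]
    simp [Units.smul_def]
  calc ∑ σ : Equiv.Perm (Fin h),
        (A.submatrix (gS ∘ σ) id).det * ∏ i, B (gS (σ i)) i
      = (A.submatrix gS id).det *
          ∑ σ : Equiv.Perm (Fin h), Equiv.Perm.sign σ • ∏ i, B (gS (σ i)) i := by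
        rw [Finset.mul_sum]
        refine Finset.sum_congr rfl fun σ _ => ?_
        rw [h1 σ]
        rw [smul_mul_assoc, mul_smul_comm]
    _ = (A.submatrix gS id).det * (B.submatrix gS id).det := by
        congr 1
        rw [Matrix.det_apply]
        simp only [Matrix.submatrix_apply, id_eq]

end CauchyBinet

section Flows

variable {V : Type*} [Fintype V] {G : SimpleGraph V} (src tgt : G.edgeSet → V)

/-- generic-ring incidence matrix -/
noncomputable def incMat (R : Type*) [Ring R] : Matrix V G.edgeSet R :=
  fun v e => (if v = tgt e then 1 else 0) - (if v = src e then 1 else 0)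

lemma incMat_int : incMat src tgt ℤ = incidence' G src tgt := rfl

/-- unit flow along a directed edge `(a, b)` -/
noncomputable def dirFlow (a b : V) : G.edgeSet → ℤ :=
  fun e => if (e : Sym2 V) = s(a, b) then (if src e = a then 1 else -1) else 0

variable (hor : ∀ e : G.edgeSet, (e : Sym2 V) = s(src e, tgt e))

include hor in
lemma src_tgt_of_eq {a b : V} (hab : G.Adj a b) (e : G.edgeSet)
    (he : (e : Sym2 V) = s(a, b)) :
    (src e = a ∧ tgt e = b) ∨ (src e = b ∧ tgt e = a) := by
  have h1 : s(src e, tgt e) = s(a, b) := (hor e) ▸ he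
  rw [Sym2.eq_iff] at h1
  tauto

include hor in
lemma mulVec_dirFlow {a b : V} (hab : G.Adj a b) :
    (incMat src tgt ℤ).mulVec (dirFlow src a b)
      = fun w => (if w = b then 1 else 0) - (if w = a then 1 else 0) := by
  funext w
  have hmem : s(a, b) ∈ G.edgeSet := hab
  set eab : G.edgeSet := ⟨s(a, b), hmem⟩ with heab
  have hval : dirFlow (G := G) src a b
      = fun e => if e = eab then (if src eab = a then 1 else -1) else 0 := by
    funext e
    by_cases he : e = eab
    · subst he; simp [dirFlow]; intro hc; exact absurd rfl hc
    · have : (e : Sym2 V) ≠ s(a, b) := by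
        intro hc; exact he (Subtype.ext hc)
      simp [dirFlow, this, he]
  rw [Matrix.mulVec]
  simp only [hval]
  have : ∀ e : G.edgeSet, (incMat src tgt ℤ) w e *
      (if e = eab then (if src eab = a then 1 else -1) else 0)
      = if e = eab then ((incMat src tgt ℤ) w eab * (if src eab = a then 1 else -1)) else 0 := by
    intro e
    by_cases he : e = eab <;> simp [he]
  rw [show ((incMat src tgt ℤ) w ⬝ᵥ fun e => if e = eab then (if src eab = a then 1 else -1) else 0)
      = ∑ e : G.edgeSet, if e = eab then ((incMat src tgt ℤ) w eab * (if src eab = a then 1 else -1)) else 0 by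
    rw [dotProduct]; exact Finset.sum_congr rfl fun e _ => this e]
  rw [Finset.sum_ite_eq' Finset.univ eab]
  simp only [Finset.mem_univ, if_true]
  rcases src_tgt_of_eq src tgt hor hab eab (by rfl) with ⟨h1, h2⟩ | ⟨h1, h2⟩
  · rw [if_pos h1]
    simp [incMat, h1, h2]
  · have hne : a ≠ b := hab.ne
    rw [if_neg (by rw [h1]; exact fun hc => hne hc.symm)]
    simp only [incMat, h1, h2]
    split <;> split <;> ring

noncomputable def walkFlow : {u v : V} → G.Walk u v → G.edgeSet → ℤ
  | _, _, SimpleGraph.Walk.nil => 0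
  | u, _, SimpleGraph.Walk.cons (v := b) _ p => dirFlow src u b + walkFlow p

include hor in
lemma mulVec_walkFlow {u v : V} (p : G.Walk u v) :
    (incMat src tgt ℤ).mulVec (walkFlow src p)
      = fun w => (if w = v then 1 else 0) - (if w = u then 1 else 0) := by
  induction p with
  | nil => funext w; simp [walkFlow]
  | cons hadj p ih =>
    rename_i a b c
    funext w
    rw [walkFlow]
    rw [Matrix.mulVec_add]
    have h1 := mulVec_dirFlow src tgt hor hadj
    rw [Pi.add_apply, h1, ih]
    ring

lemma walkFlow_support {u v : V} (p : G.Walk u v) (e : G.edgeSet)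
    (he : walkFlow src p e ≠ 0) : (e : Sym2 V) ∈ p.edges := by
  induction p with
  | nil => simp [walkFlow] at he
  | cons hadj p ih =>
    rename_i a b c
    rw [walkFlow, Pi.add_apply] at he
    rw [SimpleGraph.Walk.edges_cons]
    by_cases h1 : (e : Sym2 V) = s(a, b)
    · exact List.mem_cons.2 (Or.inl h1)
    · refine List.mem_cons.2 (Or.inr (ih ?_))
      intro hc
      rw [hc] at he
      simp [dirFlow, h1] at he

lemma walkFlow_ne_zero {u v : V} (p : G.Walk u v) (hp : p.IsTrail) (e : G.edgeSet)
    (he : (e : Sym2 V) ∈ p.edges) : walkFlow src p e ≠ 0 := by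
  induction p with
  | nil => simp at he
  | cons hadj p ih =>
    rename_i a b c
    rw [SimpleGraph.Walk.isTrail_cons] at hp
    rw [SimpleGraph.Walk.edges_cons, List.mem_cons] at he
    rw [walkFlow, Pi.add_apply]
    rcases he with he | he
    · have h2 : walkFlow src p e = 0 := by
        by_contra hc
        exact hp.2 (he ▸ walkFlow_support src p e hc)
      rw [h2, add_zero]
      simp only [dirFlow, if_pos he]
      by_cases h3 : src e = a <;> simp [h3]
    · have h1 : (e : Sym2 V) ≠ s(a, b) := fun hc => hp.2 (hc ▸ he)
      have h2 : dirFlow (G := G) src a b e = 0 := by simp [dirFlow, h1]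
      rw [h2, zero_add]
      exact ih hp.1 he

include hor in
/-- A flow supported on an acyclic subgraph is zero. -/
lemma flow_eq_zero_of_acyclic {R : Type*} [CommRing R]
    (A : SimpleGraph V) (hA : A ≤ G) (hac : A.IsAcyclic) (f : G.edgeSet → R)
    (hsupp : ∀ e : G.edgeSet, f e ≠ 0 → (e : Sym2 V) ∈ A.edgeSet)
    (hf : (incMat src tgt R).mulVec f = 0) : f = 0 := by
  funext e0
  rw [Pi.zero_apply]
  by_contra hf0
  -- e0 is an edge of A, hence a bridge
  have hmemA : (e0 : Sym2 V) ∈ A.edgeSet := hsupp e0 hf0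
  set a := src e0 with ha
  set b := tgt e0 with hb
  have hadjA : A.Adj a b := by
    rw [← SimpleGraph.mem_edgeSet, ← hor e0]; exact hmemA
  have hbridge : A.IsBridge s(a, b) :=
    (SimpleGraph.isAcyclic_iff_forall_adj_isBridge.mp hac) hadjA
  rw [SimpleGraph.isBridge_iff] at hbridge
  set A' := A \ SimpleGraph.fromEdgeSet {s(a, b)} with hA'
  have hnr : ¬ A'.Reachable a b := hbridge
  set K : Finset V := Finset.univ.filter (fun v => A'.Reachable a v) with hK
  have haK : a ∈ K := by
    rw [hK, Finset.mem_filter]; exact ⟨Finset.mem_univ _, SimpleGraph.Reachable.refl a⟩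
  have hbK : b ∉ K := by
    rw [hK, Finset.mem_filter]; intro hc; exact hnr hc.2
  have h0 : ∑ v ∈ K, ((incMat src tgt R).mulVec f) v = 0 := by
    rw [hf]; simp
  rw [show ∀ x, (∑ v ∈ K, ((incMat src tgt R).mulVec f) v = x) ↔
      (∑ v ∈ K, ∑ e : G.edgeSet, (incMat src tgt R) v e * f e = x) from fun x => by rfl] at h0
  rw [Finset.sum_comm] at h0
  have hterm : ∀ e : G.edgeSet,
      ∑ v ∈ K, (incMat src tgt R) v e * f e
      = ((if tgt e ∈ K then (1:R) else 0) - (if src e ∈ K then 1 else 0)) * f e := by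
    intro e
    rw [← Finset.sum_mul]
    congr 1
    simp only [incMat]
    rw [Finset.sum_sub_distrib, Finset.sum_ite_eq' K (tgt e) (fun _ => (1:R)),
      Finset.sum_ite_eq' K (src e) (fun _ => (1:R))]
  rw [Finset.sum_congr rfl (fun e _ => hterm e)] at h0
  rw [Finset.sum_eq_single e0] at h0
  · rw [← ha, ← hb, if_pos haK, if_neg hbK] at h0
    apply hf0
    have : (-1 : R) * f e0 = 0 := by rw [← h0]; ring_nf
    rwa [neg_one_mul, neg_eq_zero] at this
  · intro e _ hne
    by_cases hfe : f e = 0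
    · rw [hfe, mul_zero]
    · have hmem : (e : Sym2 V) ∈ A.edgeSet := hsupp e hfe
      have hadj : A'.Adj (src e) (tgt e) := by
        rw [hA', SimpleGraph.sdiff_adj]
        constructor
        · rw [← SimpleGraph.mem_edgeSet, ← hor e]; exact hmem
        · rw [SimpleGraph.fromEdgeSet_adj]
          rintro ⟨hc, -⟩
          rw [Set.mem_singleton_iff] at hc
          apply hne
          apply Subtype.ext
          rw [hor e, hc, ha, hb, ← hor e0]
      have hiff : (src e ∈ K) ↔ (tgt e ∈ K) := by
        rw [hK, Finset.mem_filter, Finset.mem_filter]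
        constructor
        · rintro ⟨-, hr⟩; exact ⟨Finset.mem_univ _, hr.trans hadj.reachable⟩
        · rintro ⟨-, hr⟩; exact ⟨Finset.mem_univ _, hr.trans hadj.symm.reachable⟩
      by_cases hsK : src e ∈ K
      · rw [if_pos hsK, if_pos (hiff.mp hsK), sub_self, zero_mul]
      · rw [if_neg hsK, if_neg (fun hc => hsK (hiff.mpr hc)), sub_self, zero_mul]
  · intro hc
    exact absurd (Finset.mem_univ e0) hc

end Flows

section Main

variable {V : Type*} [Fintype V] {G : SimpleGraph V} (src tgt : G.edgeSet → V) {h : ℕ}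

lemma edges_mapLe {G' : SimpleGraph V} (hle : G ≤ G') {u v : V} (p : G.Walk u v) :
    (p.mapLe hle).edges = p.edges := by
  simp only [SimpleGraph.Walk.mapLe, SimpleGraph.Walk.edges_map]
  have h1 : Sym2.map ⇑(SimpleGraph.Hom.ofLE hle) = id := by
    have h2 : ⇑(SimpleGraph.Hom.ofLE hle) = fun x => x := rfl
    rw [h2, Sym2.map_id']
  rw [h1, List.map_id]

lemma int_eq_zero_of_mulVec (M : Matrix (Fin h) (Fin h) ℤ) (hdet : M.det ≠ 0)
    {y : Fin h → ℤ} (hy : M.mulVec y = 0) : y = 0 := by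
  have h1 : M.det • y = 0 := by
    calc M.det • y = (M.det • (1 : Matrix (Fin h) (Fin h) ℤ)).mulVec y := by
          rw [Matrix.smul_mulVec, Matrix.one_mulVec]
    _ = (M.adjugate * M).mulVec y := by rw [Matrix.adjugate_mul]
    _ = M.adjugate.mulVec (M.mulVec y) := by rw [Matrix.mulVec_mulVec]
    _ = 0 := by rw [hy, Matrix.mulVec_zero]
  funext i
  have h2 : M.det * y i = 0 := by
    have := congrFun h1 i
    simpa using this
  rcases mul_eq_zero.mp h2 with hc | hc
  · exact absurd hc hdet
  · exact hc

variable (hor : ∀ e : G.edgeSet, (e : Sym2 V) = s(src e, tgt e))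
variable (C : Matrix G.edgeSet (Fin h) ℤ)

include hor in
lemma isUnit_det_submatrix_of_tree
    (hinj : Function.Injective C.mulVecLin)
    (hker : LinearMap.range C.mulVecLin = LinearMap.ker (incidence' G src tgt).mulVecLin)
    (T : SimpleGraph V) (hTG : T ≤ G) (hT : T.IsTree)
    (g : Fin h → G.edgeSet) (hg : Function.Injective g)
    (hgmem : ∀ i, ((g i : Sym2 V)) ∉ T.edgeSet)
    (hgsurj : ∀ e : G.edgeSet, (e : Sym2 V) ∉ T.edgeSet → ∃ i, g i = e) :
    IsUnit (C.submatrix g id).det := by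
  classical
  have hfund : ∀ e0 : G.edgeSet, (e0 : Sym2 V) ∉ T.edgeSet →
      ∃ f : G.edgeSet → ℤ, (incidence' G src tgt).mulVecLin f = 0 ∧
        ∀ e' : G.edgeSet, (e' : Sym2 V) ∉ T.edgeSet →
          f e' = (if e' = e0 then 1 else 0) := by
    intro e0 he0
    obtain ⟨p0⟩ : T.Reachable (tgt e0) (src e0) := hT.isConnected.preconnected _ _
    refine ⟨Pi.single e0 1 + walkFlow src (p0.mapLe hTG), ?_, ?_⟩
    · rw [Matrix.mulVecLin_apply, Matrix.mulVec_add, ← incMat_int src tgt,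
        mulVec_walkFlow src tgt hor]
      funext v
      rw [Pi.add_apply, Matrix.mulVec_single_one, Matrix.col_apply]
      simp only [incMat, Pi.zero_apply]
      ring
    · intro e' he'
      rw [Pi.add_apply]
      have hwf : walkFlow src (p0.mapLe hTG) e' = 0 := by
        by_contra hc
        have hmem := walkFlow_support src _ e' hc
        rw [edges_mapLe] at hmem
        exact he' (p0.edges_subset_edgeSet hmem)
      rw [hwf, add_zero, Pi.single_apply]
  choose F hF0 hFval using hfund
  set M := C.submatrix g id with hM
  have hsub : ∀ y : Fin h → ℤ, ∀ i, M.mulVec y i = (C.mulVec y) (g i) := by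
    intro y i
    simp [hM, Matrix.mulVec, dotProduct, Matrix.submatrix_apply]
  have hbij : Function.Bijective M.mulVecLin := by
    constructor
    · rw [← LinearMap.ker_eq_bot]
      rw [Submodule.eq_bot_iff]
      intro y hy
      rw [LinearMap.mem_ker, Matrix.mulVecLin_apply] at hy
      set f := C.mulVec y with hf
      have hfker : (incidence' G src tgt).mulVecLin f = 0 := by
        have hmem : f ∈ LinearMap.range C.mulVecLin := ⟨y, rfl⟩
        rw [hker, LinearMap.mem_ker] at hmem
        exact hmem
      have hfz : f = 0 := by
        apply flow_eq_zero_of_acyclic src tgt hor T hTG hT.IsAcyclic f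
        · intro e hfe
          by_contra hnm
          obtain ⟨i, rfl⟩ := hgsurj e hnm
          apply hfe
          show (C.mulVec y) (g i) = 0
          rw [← hsub y i, hy]
          rfl
        · rw [incMat_int, ← Matrix.mulVecLin_apply, hfker]
      apply hinj
      rw [Matrix.mulVecLin_apply, map_zero, ← hf, hfz]
    · intro z
      set f : G.edgeSet → ℤ := ∑ i, z i • F (g i) (hgmem i) with hf
      have hfker : (incidence' G src tgt).mulVecLin f = 0 := by
        rw [hf, map_sum]
        refine Finset.sum_eq_zero fun i _ => ?_
        rw [LinearMap.map_smul, hF0 (g i) (hgmem i), smul_zero]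
      obtain ⟨y, hy⟩ : f ∈ LinearMap.range C.mulVecLin := by
        rw [hker, LinearMap.mem_ker]; exact hfker
      refine ⟨y, ?_⟩
      funext i
      rw [Matrix.mulVecLin_apply, hsub y i]
      have hCy : C.mulVec y = f := hy
      rw [hCy, hf, Finset.sum_apply]
      have hterm : ∀ j : Fin h,
          (z j • F (g j) (hgmem j)) (g i) = if i = j then z j else 0 := by
        intro j
        rw [Pi.smul_apply, hFval (g j) (hgmem j) (g i) (hgmem i), smul_eq_mul]
        by_cases hij : i = j
        · subst hij; simp
        · rw [if_neg (fun hc => hij (hg hc)), if_neg hij, mul_zero]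
      rw [Finset.sum_congr rfl fun j _ => hterm j, Finset.sum_ite_eq]
      simp
  let eqv : (Fin h → ℤ) ≃ₗ[ℤ] (Fin h → ℤ) := LinearEquiv.ofBijective M.mulVecLin hbij
  let N := LinearMap.toMatrix' (eqv.symm : (Fin h → ℤ) →ₗ[ℤ] (Fin h → ℤ))
  have hcoe : ∀ y, eqv y = M.mulVecLin y := fun y => rfl
  have hNM : N * M = 1 := by
    have h1 : ((eqv.symm : (Fin h → ℤ) →ₗ[ℤ] (Fin h → ℤ)) ∘ₗ Matrix.toLin' M)
        = LinearMap.id := by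
      apply LinearMap.ext
      intro y
      simp only [LinearMap.comp_apply, Matrix.toLin'_apply', LinearMap.id_apply]
      rw [← hcoe y]
      exact eqv.symm_apply_apply y
    calc N * M
        = LinearMap.toMatrix' ((eqv.symm : (Fin h → ℤ) →ₗ[ℤ] (Fin h → ℤ)) ∘ₗ
            Matrix.toLin' M) := by
          rw [LinearMap.toMatrix'_comp, LinearMap.toMatrix'_toLin']
      _ = 1 := by rw [h1, LinearMap.toMatrix'_id]
  have hMN : M * N = 1 := by
    have h1 : (Matrix.toLin' M ∘ₗ (eqv.symm : (Fin h → ℤ) →ₗ[ℤ] (Fin h → ℤ)))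
        = LinearMap.id := by
      apply LinearMap.ext
      intro y
      simp only [LinearMap.comp_apply, Matrix.toLin'_apply', LinearMap.id_apply]
      exact eqv.apply_symm_apply y
    calc M * N
        = LinearMap.toMatrix' (Matrix.toLin' M ∘ₗ
            (eqv.symm : (Fin h → ℤ) →ₗ[ℤ] (Fin h → ℤ))) := by
          rw [LinearMap.toMatrix'_comp, LinearMap.toMatrix'_toLin']
      _ = 1 := by rw [h1, LinearMap.toMatrix'_id]
  exact (Matrix.isUnit_iff_isUnit_det M).mp ⟨⟨M, N, hMN, hNM⟩, rfl⟩

include hor in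
lemma tree_of_det_ne_zero
    (hG : G.Connected)
    (hEcard : Fintype.card G.edgeSet = h + (Fintype.card V - 1))
    (hker : LinearMap.range C.mulVecLin = LinearMap.ker (incidence' G src tgt).mulVecLin)
    (S : Finset G.edgeSet) (hScard : S.card = h)
    (g : Fin h → G.edgeSet) (hgmem : ∀ i, g i ∈ S)
    (hdet : (C.submatrix g id).det ≠ 0) :
    SimpleGraph.fromEdgeSet {z : Sym2 V | ∃ e : G.edgeSet, e ∉ S ∧ (e : Sym2 V) = z} ≤ G ∧
    (SimpleGraph.fromEdgeSet
      {z : Sym2 V | ∃ e : G.edgeSet, e ∉ S ∧ (e : Sym2 V) = z}).IsTree := by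
  classical
  set MS : Set (Sym2 V) := {z : Sym2 V | ∃ e : G.edgeSet, e ∉ S ∧ (e : Sym2 V) = z} with hMS
  set A : SimpleGraph V := SimpleGraph.fromEdgeSet MS with hA
  have hALE : A ≤ G := by
    intro a b hab
    rw [hA, SimpleGraph.fromEdgeSet_adj] at hab
    obtain ⟨⟨e, -, he⟩, -⟩ := hab
    rw [← SimpleGraph.mem_edgeSet, ← he]
    exact e.2
  have hAedge : A.edgeSet = MS := by
    rw [hA, SimpleGraph.edgeSet_fromEdgeSet]
    ext z
    simp only [Set.mem_diff, Set.mem_setOf_eq, hMS]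
    constructor
    · rintro ⟨hz, -⟩; exact hz
    · rintro ⟨e, heS, he⟩
      refine ⟨⟨e, heS, he⟩, ?_⟩
      rw [← he]
      exact G.not_isDiag_of_mem_edgeSet e.2
  have hginj : Function.Injective g := by
    intro i j hij
    by_contra hne
    apply hdet
    apply Matrix.det_zero_of_row_eq hne
    funext k; simp [Matrix.submatrix_apply, hij]
  have hacy : A.IsAcyclic := by
    by_contra hcyc
    simp only [SimpleGraph.IsAcyclic] at hcyc
    push_neg at hcyc
    obtain ⟨v, c, hc⟩ := hcyc
    set c' : G.Walk v v := c.mapLe hALE with hc'def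
    have hc' : c'.IsCycle := hc.mapLe hALE
    have hflow : (incidence' G src tgt).mulVecLin (walkFlow src c') = 0 := by
      rw [Matrix.mulVecLin_apply, ← incMat_int src tgt, mulVec_walkFlow src tgt hor]
      funext w; simp
    obtain ⟨y, hy⟩ : walkFlow src c' ∈ LinearMap.range C.mulVecLin := by
      rw [hker, LinearMap.mem_ker]; exact hflow
    have hSzero : ∀ i, (C.submatrix g id).mulVec y i = 0 := by
      intro i
      have h1 : (C.submatrix g id).mulVec y i = (C.mulVec y) (g i) := by
        simp [Matrix.mulVec, dotProduct, Matrix.submatrix_apply]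
      rw [h1, show C.mulVec y = walkFlow src c' from hy]
      by_contra hne
      have hmem := walkFlow_support src c' (g i) hne
      have hmem2 : ((g i : G.edgeSet) : Sym2 V) ∈ A.edgeSet := by
        rw [hc'def, edges_mapLe] at hmem
        exact c.edges_subset_edgeSet hmem
      rw [hAedge, hMS] at hmem2
      obtain ⟨e', he'S, he'⟩ := hmem2
      apply he'S
      rw [Subtype.ext he']
      exact hgmem i
    have hy0 : y = 0 := int_eq_zero_of_mulVec _ hdet (funext hSzero)
    have hlen : 0 < c'.edges.length := by
      rw [SimpleGraph.Walk.length_edges]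
      have := hc'.three_le_length
      omega
    obtain ⟨z, hz⟩ := List.exists_mem_of_length_pos hlen
    have hzE : z ∈ G.edgeSet := c'.edges_subset_edgeSet hz
    apply walkFlow_ne_zero src c' hc'.isTrail ⟨z, hzE⟩ hz
    rw [← hy, hy0, map_zero]
    rfl
  -- connectivity via a rank argument over ℚ
  have hVpos : 0 < Fintype.card V := Fintype.card_pos_iff.mpr hG.nonempty
  have hSc : (Sᶜ : Finset G.edgeSet).card = Fintype.card V - 1 := by
    rw [Finset.card_compl, hScard, hEcard]
    omega
  set N : Matrix V (↥(Sᶜ : Finset G.edgeSet)) ℚ :=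
    fun v j => incMat src tgt ℚ v ↑j with hN
  have hNinj : Function.Injective N.mulVecLin := by
    rw [← LinearMap.ker_eq_bot, Submodule.eq_bot_iff]
    intro y hy
    rw [LinearMap.mem_ker, Matrix.mulVecLin_apply] at hy
    set f : G.edgeSet → ℚ :=
      fun e => if he : e ∈ (Sᶜ : Finset G.edgeSet) then y ⟨e, he⟩ else 0 with hfdef
    have hfmul : (incMat src tgt ℚ).mulVec f = 0 := by
      funext v
      have hcalc : (incMat src tgt ℚ).mulVec f v = N.mulVec y v := by
        calc (incMat src tgt ℚ).mulVec f v
            = ∑ e : G.edgeSet, incMat src tgt ℚ v e * f e := rfl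
          _ = ∑ e ∈ (Sᶜ : Finset G.edgeSet), incMat src tgt ℚ v e * f e := by
              refine (Finset.sum_subset (Finset.subset_univ _) ?_).symm
              intro e _ he
              rw [hfdef]
              simp [he]
          _ = ∑ j : ↥(Sᶜ : Finset G.edgeSet), incMat src tgt ℚ v ↑j * f ↑j :=
              (Finset.sum_coe_sort _ _).symm
          _ = N.mulVec y v := by
              refine Finset.sum_congr rfl fun j _ => ?_
              rw [hfdef]
              simp [j.2]
              exact Or.inl rfl
      rw [hcalc, hy]
    have hfz : f = 0 := by
      apply flow_eq_zero_of_acyclic src tgt hor A hALE hacy f _ hfmul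
      intro e hfe
      simp only [hfdef] at hfe
      by_cases he : e ∈ (Sᶜ : Finset G.edgeSet)
      · rw [hAedge, hMS]
        exact ⟨e, Finset.mem_compl.mp he, rfl⟩
      · rw [dif_neg he] at hfe
        exact absurd rfl hfe
    funext j
    have hj := congrFun hfz ↑j
    simp only [hfdef, dif_pos j.2] at hj
    simpa using hj
  have hrankN : N.rank = Fintype.card V - 1 := by
    rw [Matrix.rank, LinearMap.finrank_range_of_inj hNinj, Module.finrank_pi,
      Fintype.card_coe, hSc]
  have hranknullity := LinearMap.finrank_range_add_finrank_ker (Nᵀ.mulVecLin)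
  rw [Module.finrank_pi] at hranknullity
  have hrange : Module.finrank ℚ (LinearMap.range Nᵀ.mulVecLin)
      = Fintype.card V - 1 := by
    rw [show Module.finrank ℚ (LinearMap.range Nᵀ.mulVecLin) = Nᵀ.rank from rfl,
      Matrix.rank_transpose, hrankN]
  have hkerdim : Module.finrank ℚ (LinearMap.ker Nᵀ.mulVecLin) = 1 := by omega
  set c1 : V → ℚ := fun _ => 1 with hc1def
  have hc1mem : c1 ∈ LinearMap.ker Nᵀ.mulVecLin := by
    rw [LinearMap.mem_ker, Matrix.mulVecLin_apply]
    funext j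
    have : Nᵀ.mulVec c1 j = ∑ v : V, incMat src tgt ℚ v ↑j := by
      refine Finset.sum_congr rfl fun v _ => ?_
      show Nᵀ j v * c1 v = incMat src tgt ℚ v ↑j
      simp [hN, hc1def]
      rfl
    rw [this]
    simp only [incMat]
    rw [Finset.sum_sub_distrib,
      Finset.sum_ite_eq' Finset.univ (tgt ↑j) (fun _ => (1:ℚ)),
      Finset.sum_ite_eq' Finset.univ (src ↑j) (fun _ => (1:ℚ))]
    simp
  have hc1ne : c1 ≠ 0 := by
    obtain ⟨v0⟩ := hG.nonempty
    intro hz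
    exact one_ne_zero (congrFun hz v0 : (1:ℚ) = 0)
  have hspan : Submodule.span ℚ {c1} = LinearMap.ker Nᵀ.mulVecLin := by
    apply Submodule.eq_of_le_of_finrank_eq
    · rw [Submodule.span_le, Set.singleton_subset_iff]
      exact hc1mem
    · rw [finrank_span_singleton hc1ne, hkerdim]
  have hpre : A.Preconnected := by
    intro a b
    set gK : V → ℚ := fun v => if A.Reachable a v then 1 else 0 with hgKdef
    have hgKmem : gK ∈ LinearMap.ker Nᵀ.mulVecLin := by
      rw [LinearMap.mem_ker, Matrix.mulVecLin_apply]
      funext j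
      have hadj : A.Adj (src ↑j) (tgt ↑j) := by
        rw [← SimpleGraph.mem_edgeSet, ← hor ↑j, hAedge, hMS]
        exact ⟨↑j, Finset.mem_compl.mp j.2, rfl⟩
      have hiff : A.Reachable a (src ↑j) ↔ A.Reachable a (tgt ↑j) :=
        ⟨fun hr => hr.trans hadj.reachable, fun hr => hr.trans hadj.symm.reachable⟩
      have hstep : Nᵀ.mulVec gK j = gK (tgt ↑j) - gK (src ↑j) := by
        calc Nᵀ.mulVec gK j
            = ∑ v : V, ((if v = tgt ↑j then (1:ℚ) else 0)
                - (if v = src ↑j then 1 else 0)) * gK v := rfl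
          _ = ∑ v : V, ((if v = tgt ↑j then gK v else 0)
                - (if v = src ↑j then gK v else 0)) := by
              refine Finset.sum_congr rfl fun v _ => ?_
              rw [sub_mul, ite_mul, ite_mul, one_mul, zero_mul]
          _ = gK (tgt ↑j) - gK (src ↑j) := by
              rw [Finset.sum_sub_distrib,
                Finset.sum_ite_eq' Finset.univ (tgt ↑j) gK,
                Finset.sum_ite_eq' Finset.univ (src ↑j) gK]
              simp
      rw [hstep, hgKdef]
      simp only [Pi.zero_apply]
      by_cases hr : A.Reachable a (src ↑j)
      · rw [if_pos (hiff.mp hr), if_pos hr, sub_self]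
      · rw [if_neg (fun hc => hr (hiff.mpr hc)), if_neg hr, sub_self]
    rw [← hspan] at hgKmem
    obtain ⟨cc, hcc⟩ := Submodule.mem_span_singleton.mp hgKmem
    have ha1 : gK a = 1 := by
      rw [hgKdef]
      simp [SimpleGraph.Reachable.refl a]
    have hcc1 : cc = 1 := by
      have hval := congrFun hcc a
      rw [ha1] at hval
      simpa [hc1def] using hval
    by_contra hnr
    have hb0 : gK b = 0 := by
      rw [hgKdef]
      simp [hnr]
    have hval := congrFun hcc b
    rw [hb0, hcc1] at hval
    simp [hc1def] at hval
  exact ⟨hALE, ⟨{ preconnected := hpre, nonempty := hG.nonempty }, hacy⟩⟩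

noncomputable def gchoice {α : Type*} (hn : ℕ) (S : Finset α) (hS : S.card = hn) :
    Fin hn → α :=
  fun i => ↑(S.equivFin.symm (Fin.cast hS.symm i))

lemma gchoice_injective {α : Type*} (hn : ℕ) (S : Finset α) (hS : S.card = hn) :
    Function.Injective (gchoice hn S hS) := by
  intro i j hij
  have h1 := Subtype.coe_injective hij
  have h2 := S.equivFin.symm.injective h1
  exact Fin.cast_injective hS.symm h2

lemma gchoice_mem {α : Type*} (hn : ℕ) (S : Finset α) (hS : S.card = hn) (i : Fin hn) :
    gchoice hn S hS i ∈ S := (S.equivFin.symm _).2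

lemma gchoice_surj {α : Type*} (hn : ℕ) (S : Finset α) (hS : S.card = hn) :
    ∀ e ∈ S, ∃ i, gchoice hn S hS i = e := by
  intro e he
  refine ⟨Fin.cast hS (S.equivFin ⟨e, he⟩), ?_⟩
  have h1 : Fin.cast hS.symm (Fin.cast hS (S.equivFin ⟨e, he⟩)) = S.equivFin ⟨e, he⟩ :=
    Fin.ext rfl
  show ↑(S.equivFin.symm (Fin.cast hS.symm (Fin.cast hS (S.equivFin ⟨e, he⟩)))) = e
  rw [h1, Equiv.symm_apply_apply]

lemma edgeSet_complement {V : Type*} [Fintype V] {G : SimpleGraph V}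
    (S : Finset G.edgeSet) :
    (SimpleGraph.fromEdgeSet
        {z : Sym2 V | ∃ e : G.edgeSet, e ∉ S ∧ (e : Sym2 V) = z}).edgeSet
      = {z : Sym2 V | ∃ e : G.edgeSet, e ∉ S ∧ (e : Sym2 V) = z} := by
  rw [SimpleGraph.edgeSet_fromEdgeSet]
  ext z
  simp only [Set.mem_diff, Set.mem_setOf_eq]
  constructor
  · rintro ⟨hz, -⟩; exact hz
  · rintro ⟨e, heS, he⟩
    refine ⟨⟨e, heS, he⟩, ?_⟩
    rw [← he]
    exact G.not_isDiag_of_mem_edgeSet e.2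

end Main

section FinalAux

variable {V : Type*} [Fintype V] {G : SimpleGraph V} (src tgt : G.edgeSet → V) {h : ℕ}
variable (hor : ∀ e : G.edgeSet, (e : Sym2 V) = s(src e, tgt e))
variable (C : Matrix G.edgeSet (Fin h) ℤ)

include hor in
lemma isUnit_det_of_complement_tree (S : Finset G.edgeSet) (hS : S.card = h)
    (hinj : Function.Injective C.mulVecLin)
    (hker : LinearMap.range C.mulVecLin = LinearMap.ker (incidence' G src tgt).mulVecLin)
    (hTG : SimpleGraph.fromEdgeSet
        {z : Sym2 V | ∃ e : G.edgeSet, e ∉ S ∧ (e : Sym2 V) = z} ≤ G)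
    (hT : (SimpleGraph.fromEdgeSet
        {z : Sym2 V | ∃ e : G.edgeSet, e ∉ S ∧ (e : Sym2 V) = z}).IsTree) :
    IsUnit (C.submatrix (gchoice h S hS) id).det := by
  classical
  apply isUnit_det_submatrix_of_tree src tgt hor C hinj hker _ hTG hT
    (gchoice h S hS) (gchoice_injective h S hS)
  · intro i
    rw [edgeSet_complement]
    rintro ⟨e', he'S, he'⟩
    exact he'S (by rw [Subtype.ext he']; exact gchoice_mem h S hS i)
  · intro e he
    rw [edgeSet_complement] at he
    have heS : e ∈ S := by
      by_contra heS
      exact he ⟨e, heS, rfl⟩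
    exact gchoice_surj h S hS e heS

end FinalAux

/-- Matrix-tree theorem: `det Λ_G(x) = Ψ_G(x)` for any cycle basis matrix `C`. -/
theorem det_graphLap_eq_kirchhoff {V : Type*} [Fintype V]
    (G : SimpleGraph V) (hG : G.Connected)
    (src tgt : G.edgeSet → V)
    (hor : ∀ e : G.edgeSet, (e : Sym2 V) = s(src e, tgt e))
    (h : ℕ)
    (hh : (h : ℤ) = (Fintype.card G.edgeSet : ℤ) - Fintype.card V + 1)
    (C : Matrix G.edgeSet (Fin h) ℤ)
    (hinj : Function.Injective C.mulVecLin)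
    (hker : LinearMap.range C.mulVecLin =
      LinearMap.ker (incidence G src tgt).mulVecLin)
    (x : G.edgeSet → ℝ) :
    (graphLap C x).det = kirchhoff G x := by
  classical
  have hker' : LinearMap.range C.mulVecLin =
      LinearMap.ker (incidence' G src tgt).mulVecLin := hker
  have hVpos : 1 ≤ Fintype.card V := Fintype.card_pos_iff.mpr hG.nonempty
  have hEcard : Fintype.card G.edgeSet = h + (Fintype.card V - 1) := by omega
  set C' : Matrix G.edgeSet (Fin h) ℝ := C.map (Int.cast : ℤ → ℝ) with hC'
  have hLap : graphLap C x = (Matrix.diagonal x * C')ᵀ * C' := by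
    rw [graphLap, Matrix.transpose_mul, Matrix.diagonal_transpose, ← hC']
    congr!
  set dfun : Finset G.edgeSet → ℤ := fun S =>
    if hS : S.card = h then (C.submatrix (gchoice h S hS) id).det else 0 with hdfun
  have hCB := cauchy_binet (Matrix.diagonal x * C') C'
      (fun S hS => gchoice h S hS)
      (fun S hS => gchoice_injective h S hS)
      (fun S hS i => gchoice_mem h S hS i)
  have hterm : ∀ S ∈ (Finset.univ : Finset G.edgeSet).powersetCard h,
      (if hS : S.card = h then
        ((Matrix.diagonal x * C').submatrix (gchoice h S hS) id).det *
          (C'.submatrix (gchoice h S hS) id).det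
      else 0)
      = (∏ e ∈ S, x e) * (((dfun S : ℤ) : ℝ) * ((dfun S : ℤ) : ℝ)) := by
    intro S hSmem
    rw [Finset.mem_powersetCard] at hSmem
    obtain ⟨-, hS⟩ := hSmem
    rw [dif_pos hS]
    have hd : dfun S = (C.submatrix (gchoice h S hS) id).det := by
      rw [hdfun]; exact dif_pos hS
    set gS := gchoice h S hS with hgSdef
    have hsplit : (Matrix.diagonal x * C').submatrix gS id
        = Matrix.diagonal (fun i => x (gS i)) * (C'.submatrix gS id) := by
      ext i j
      rw [Matrix.submatrix_apply, Matrix.diagonal_mul, Matrix.diagonal_mul,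
        Matrix.submatrix_apply]
    have hdetA : ((Matrix.diagonal x * C').submatrix gS id).det
        = (∏ i, x (gS i)) * (C'.submatrix gS id).det := by
      rw [hsplit, Matrix.det_mul, Matrix.det_diagonal]
    have himg : Finset.image gS Finset.univ = S := by
      apply Finset.eq_of_subset_of_card_le
      · intro a ha
        rw [Finset.mem_image] at ha
        obtain ⟨i, -, rfl⟩ := ha
        exact gchoice_mem h S hS i
      · rw [Finset.card_image_of_injective _ (gchoice_injective h S hS), hS]
        simp
    have hprod : (∏ i, x (gS i)) = ∏ e ∈ S, x e := by
      rw [← himg, Finset.prod_image]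
      intro a _ b _ hab
      exact gchoice_injective h S hS hab
    have hdetC : (C'.submatrix gS id).det = (((C.submatrix gS id).det : ℤ) : ℝ) := by
      have hmap : C'.submatrix gS id = (C.submatrix gS id).map (Int.cast : ℤ → ℝ) := by
        ext i j
        simp [hC', Matrix.map_apply, Matrix.submatrix_apply]
      rw [hmap]
      exact (RingHom.map_det (Int.castRingHom ℝ) (C.submatrix gS id)).symm
    rw [hdetA, hdetC, hprod, hd]
    ring
  rw [hLap, hCB, Finset.sum_congr rfl hterm]
  rw [← Finset.sum_filter_of_ne (p := fun S => dfun S ≠ 0) (by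
    intro S _ hne hd0
    rw [hd0] at hne
    simp at hne)]
  rw [kirchhoff]
  have hprodT : ∀ T : SimpleGraph V,
      (∏ e : G.edgeSet, if (e : Sym2 V) ∈ T.edgeSet then (1:ℝ) else x e)
      = ∏ e ∈ Finset.univ.filter
          (fun e : G.edgeSet => ¬ (e : Sym2 V) ∈ T.edgeSet), x e := by
    intro T
    rw [Finset.prod_ite, Finset.prod_const_one, one_mul]
  have hleft : ∀ S : Finset G.edgeSet,
      Finset.univ.filter (fun e : G.edgeSet => ¬ (e : Sym2 V) ∈
        (SimpleGraph.fromEdgeSet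
          {z : Sym2 V | ∃ e' : G.edgeSet, e' ∉ S ∧ (e' : Sym2 V) = z}).edgeSet) = S := by
    intro S
    ext e
    simp only [Finset.mem_filter, Finset.mem_univ, true_and, edgeSet_complement,
      Set.mem_setOf_eq]
    constructor
    · intro hne
      by_contra heS
      exact hne ⟨e, heS, rfl⟩
    · rintro heS ⟨e', he'S, he'⟩
      exact he'S (by rw [Subtype.ext he']; exact heS)
  refine Finset.sum_bij'
    (i := fun S _ => SimpleGraph.fromEdgeSet
      {z : Sym2 V | ∃ e : G.edgeSet, e ∉ S ∧ (e : Sym2 V) = z})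
    (j := fun T _ => Finset.univ.filter
      (fun e : G.edgeSet => (e : Sym2 V) ∉ T.edgeSet)) ?_ ?_ ?_ ?_ ?_
  · -- hi : image is a spanning tree
    intro S hSmem
    rw [Finset.mem_filter, Finset.mem_powersetCard] at hSmem
    obtain ⟨⟨-, hS⟩, hdS⟩ := hSmem
    have hdet : (C.submatrix (gchoice h S hS) id).det ≠ 0 := by
      intro hc
      apply hdS
      simp only [hdfun]
      rw [dif_pos hS]
      exact hc
    have := tree_of_det_ne_zero src tgt hor C hG hEcard hker' S hS
      (gchoice h S hS) (gchoice_mem h S hS) hdet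
    rw [Finset.mem_filter]
    exact ⟨Finset.mem_univ _, this⟩
  · -- hj : complement of a tree is admissible
    intro T hTmem
    rw [Finset.mem_filter] at hTmem
    obtain ⟨-, hTG, hT⟩ := hTmem
    have hcard1 : T.edgeFinset.card + 1 = Fintype.card V := hT.card_edgeFinset
    have hcard2 : (Finset.univ.filter
        (fun e : G.edgeSet => (e : Sym2 V) ∈ T.edgeSet)).card = T.edgeFinset.card := by
      refine Finset.card_bij (fun e _ => (e : Sym2 V)) ?_ ?_ ?_
      · intro e he
        rw [Finset.mem_filter] at he
        rw [SimpleGraph.mem_edgeFinset]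
        exact he.2
      · intro e₁ h₁ e₂ h₂ hval
        exact Subtype.ext hval
      · intro z hz
        rw [SimpleGraph.mem_edgeFinset] at hz
        refine ⟨⟨z, SimpleGraph.edgeSet_mono hTG hz⟩, ?_, rfl⟩
        rw [Finset.mem_filter]
        exact ⟨Finset.mem_univ _, hz⟩
    have hsplitcard := Finset.card_filter_add_card_filter_not
      (s := (Finset.univ : Finset G.edgeSet))
      (p := fun e : G.edgeSet => (e : Sym2 V) ∈ T.edgeSet)
    rw [Finset.card_univ] at hsplitcard
    have hScard : (Finset.univ.filter
        (fun e : G.edgeSet => (e : Sym2 V) ∉ T.edgeSet)).card = h := by omega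
    rw [Finset.mem_filter, Finset.mem_powersetCard]
    refine ⟨⟨Finset.subset_univ _, hScard⟩, ?_⟩
    simp only [hdfun]
    rw [dif_pos hScard]
    apply IsUnit.ne_zero
    apply isUnit_det_submatrix_of_tree src tgt hor C hinj hker' T hTG hT
      (gchoice h _ hScard) (gchoice_injective h _ hScard)
    · intro i
      have := gchoice_mem h _ hScard i
      rw [Finset.mem_filter] at this
      exact this.2
    · intro e he
      apply gchoice_surj h _ hScard
      rw [Finset.mem_filter]
      exact ⟨Finset.mem_univ _, he⟩
  · -- left inverse
    intro S hSmem
    convert hleft S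
  · -- right inverse
    intro T hTmem
    rw [Finset.mem_filter] at hTmem
    obtain ⟨-, hTG, hT⟩ := hTmem
    have hset : {z : Sym2 V | ∃ e : G.edgeSet,
        e ∉ Finset.univ.filter (fun e : G.edgeSet => (e : Sym2 V) ∉ T.edgeSet) ∧
        (e : Sym2 V) = z} = T.edgeSet := by
      ext z
      simp only [Set.mem_setOf_eq, Finset.mem_filter, Finset.mem_univ, true_and, not_not]
      constructor
      · rintro ⟨e, he, rfl⟩
        exact he
      · intro hz
        exact ⟨⟨z, SimpleGraph.edgeSet_mono hTG hz⟩, hz, rfl⟩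
    show SimpleGraph.fromEdgeSet
        {z : Sym2 V | ∃ e : G.edgeSet,
          e ∉ Finset.univ.filter (fun e : G.edgeSet => (e : Sym2 V) ∉ T.edgeSet) ∧
          (e : Sym2 V) = z} = T
    rw [hset, SimpleGraph.fromEdgeSet_edgeSet]
  · -- terms agree
    intro S hSmem
    rw [Finset.mem_filter, Finset.mem_powersetCard] at hSmem
    obtain ⟨⟨-, hS⟩, hdS⟩ := hSmem
    have hdet : (C.submatrix (gchoice h S hS) id).det ≠ 0 := by
      intro hc
      apply hdS
      simp only [hdfun]
      rw [dif_pos hS]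
      exact hc
    have htree := tree_of_det_ne_zero src tgt hor C hG hEcard hker' S hS
      (gchoice h S hS) (gchoice_mem h S hS) hdet
    have hunit := isUnit_det_of_complement_tree src tgt hor C S hS hinj hker'
      htree.1 htree.2
    have hd : dfun S = (C.submatrix (gchoice h S hS) id).det := by
      rw [hdfun]; exact dif_pos hS
    have hsq : ((dfun S : ℤ) : ℝ) * ((dfun S : ℤ) : ℝ) = 1 := by
      rw [hd]
      rcases Int.isUnit_iff.mp hunit with h1 | h1 <;> rw [h1] <;> norm_num
    rw [hprodT, hsq, mul_one]
    exact Finset.prod_congr (by convert (hleft S).symm) (fun _ _ => rfl)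
end

section
/- Let G be a finite connected simple graph with edge set E, fixed orientation, incidence matrix B, h = |E| − |V| + 1, cycle basis matrix C, and graph Laplacian Λ_G(x) = Cᵀ · diagonal(x) · C. If x : E → ℝ satisfies x(e) > 0 for every edge e, then the symmetric matrix Λ_G(x) is positive definite. -/
open scoped Classical

open Matrix

/-- If all edge variables are strictly positive, then the graph Laplacian
`Λ_G(x)` is positive definite. -/
theorem graphLap_posDef {V : Type*} [Fintype V]
    (G : SimpleGraph V) (hG : G.Connected)
    (src tgt : G.edgeSet → V)
    (hor : ∀ e : G.edgeSet, (e : Sym2 V) = s(src e, tgt e))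
    (h : ℕ)
    (hh : (h : ℤ) = (Fintype.card G.edgeSet : ℤ) - Fintype.card V + 1)
    (C : Matrix G.edgeSet (Fin h) ℤ)
    (hinj : Function.Injective C.mulVecLin)
    (hker : LinearMap.range C.mulVecLin =
      LinearMap.ker (incidence G src tgt).mulVecLin)
    (x : G.edgeSet → ℝ) (hx : ∀ e, 0 < x e) :
    (graphLap C x).PosDef := by
  classical
  set Cr := C.map (Int.cast : ℤ → ℝ) with hCrdef
  -- The integer Gram matrix has nonzero determinant
  have hdet : (Cᵀ * C).det ≠ 0 := by
    intro h0
    obtain ⟨v, hv, hveq⟩ := Matrix.exists_mulVec_eq_zero_iff.mpr h0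
    rw [← Matrix.mulVec_mulVec] at hveq
    have h1 : (C *ᵥ v) ⬝ᵥ (C *ᵥ v) = 0 := by
      rw [Matrix.dotProduct_mulVec, ← Matrix.mulVec_transpose, hveq, zero_dotProduct]
    have hCv : C *ᵥ v = 0 := dotProduct_self_eq_zero.mp h1
    exact hv (hinj (show C.mulVecLin v = C.mulVecLin 0 by
      simp [Matrix.mulVecLin_apply, hCv]))
  -- hence the real Gram matrix has nonzero determinant
  have hgram : Crᵀ * Cr = ((Cᵀ * C).map (Int.cast : ℤ → ℝ)) := by
    rw [hCrdef, ← Matrix.transpose_map]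
    exact (Matrix.map_mul (f := Int.castRingHom ℝ)).symm
  have hdetR : (Crᵀ * Cr).det ≠ 0 := by
    rw [hgram,
      show (Cᵀ * C).map (Int.cast : ℤ → ℝ) = (Int.castRingHom ℝ).mapMatrix (Cᵀ * C) from rfl,
      ← RingHom.map_det]
    intro hc
    have hc' : (((Cᵀ * C).det : ℤ) : ℝ) = 0 := hc
    exact hdet (by exact_mod_cast hc')
  -- so the real matrix Cr has trivial kernel
  have hCrinj : ∀ z : Fin h → ℝ, Cr *ᵥ z = 0 → z = 0 := by
    intro z hz
    by_contra hz0
    refine hdetR (Matrix.exists_mulVec_eq_zero_iff.mp ⟨z, hz0, ?_⟩)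
    rw [← Matrix.mulVec_mulVec, hz, Matrix.mulVec_zero]
  have hCrH : Crᴴ = Crᵀ := by
    ext i j; simp [Matrix.conjTranspose_apply]
  rw [Matrix.posDef_iff_dotProduct_mulVec]
  constructor
  · -- Hermitian
    have hps : (Crᴴ * Matrix.diagonal x * Cr).PosSemidef :=
      (Matrix.posSemidef_diagonal_iff.mpr fun e => (hx e).le).conjTranspose_mul_mul_same Cr
    rw [hCrH] at hps
    simp only [graphLap, ← hCrdef]
    convert hps.isHermitian using 2
    congr!
  · intro z hz
    have hw : Cr *ᵥ z ≠ 0 := fun hw0 => hz (hCrinj z hw0)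
    obtain ⟨e, he⟩ := Function.ne_iff.mp hw
    have he' : (Cr *ᵥ z) e ≠ 0 := he
    have hquad : star z ⬝ᵥ (graphLap C x *ᵥ z) = ∑ f, x f * ((Cr *ᵥ z) f) ^ 2 := by
      simp only [graphLap, ← hCrdef, star_trivial, ← Matrix.mulVec_mulVec]
      rw [Matrix.dotProduct_mulVec, Matrix.vecMul_transpose]
      simp only [dotProduct, Matrix.mulVec_diagonal]
      exact Finset.sum_congr rfl fun f _ => by ring
    rw [hquad]
    refine Finset.sum_pos' (fun f _ => mul_nonneg (hx f).le (sq_nonneg _))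
      ⟨e, Finset.mem_univ e, mul_pos (hx e) (by positivity)⟩
end

section
/- Let n ≥ 1, let X be an invertible real m×m matrix, and let V₁, …, V_n be real m×m matrices. Then φⁿ_{Xᵀ}(V₁ᵀ, …, V_nᵀ) = (−1)^{n(n−1)/2} · φⁿ_X(V₁, …, V_n). (Transpose behaviour of the canonical forms: ωⁿ_{Xᵀ} = (−1)^{n(n−1)/2} ωⁿ_X.) -/
/-- The value `φⁿ_X(V₁, …, V_n) = ∑_σ sign(σ)·tr((X⁻¹V_{σ(1)})⋯(X⁻¹V_{σ(n)}))`
of the bi-invariant form `ωⁿ_X = tr((X⁻¹ dX)ⁿ)` at `X` on tangent vectors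
`V₁, …, V_n` (factorial-free convention). -/
noncomputable def phiForm {m : ℕ} (n : ℕ) (X : Matrix (Fin m) (Fin m) ℝ)
    (Vs : Fin n → Matrix (Fin m) (Fin m) ℝ) : ℝ :=
  ∑ σ : Equiv.Perm (Fin n),
    ((Equiv.Perm.sign σ : ℤ) : ℝ) *
      (List.ofFn (fun i => X⁻¹ * Vs (σ i))).prod.trace

private lemma ofFn_reverse {α : Type*} : ∀ {n : ℕ} (f : Fin n → α),
    (List.ofFn f).reverse = List.ofFn (fun i => f (Fin.rev i))
  | 0, _ => by simp
  | n+1, f => by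
    rw [List.ofFn_succ, List.reverse_cons, ofFn_reverse (fun i => f i.succ),
      List.ofFn_succ' (fun i => f (Fin.rev i))]
    simp [Fin.rev_castSucc, Fin.rev_last, List.concat_eq_append]

private def castEquivLT (n : ℕ) : Fin n ≃ {i : Fin (n+1) // (i : ℕ) < n} where
  toFun i := ⟨i.castSucc, i.isLt⟩
  invFun i := ⟨i.1, i.2⟩
  left_inv _ := rfl
  right_inv _ := rfl

private lemma revPerm_mul_finRotate (n : ℕ) :
    (Fin.revPerm : Equiv.Perm (Fin (n+1))) * finRotate (n+1) =
      (Fin.revPerm : Equiv.Perm (Fin n)).extendDomain (castEquivLT n) := by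
  ext i
  refine Fin.lastCases ?_ (fun x => ?_) i
  · rw [Equiv.Perm.mul_apply, finRotate_succ_apply,
      Equiv.Perm.extendDomain_apply_not_subtype]
    · rw [Fin.last_add_one, Fin.revPerm_apply, Fin.rev_zero]
    · simp
  · have h1 : (Fin.revPerm : Equiv.Perm (Fin n)).extendDomain (castEquivLT n)
        ((castEquivLT n) x : Fin (n+1)) = ((castEquivLT n) (Fin.revPerm x) : Fin (n+1)) :=
      Equiv.Perm.extendDomain_apply_image _ _ _
    have h2 : ((castEquivLT n) x : Fin (n+1)) = x.castSucc := rfl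
    rw [h2] at h1
    rw [Equiv.Perm.mul_apply, finRotate_succ_apply, h1, Fin.coeSucc_eq_succ,
      Fin.revPerm_apply, Fin.rev_succ]
    rfl

private lemma sign_revPerm : ∀ n : ℕ,
    Equiv.Perm.sign (Fin.revPerm : Equiv.Perm (Fin n)) = (-1) ^ (n * (n - 1) / 2)
  | 0 => by decide
  | n+1 => by
    have h := congrArg Equiv.Perm.sign (revPerm_mul_finRotate n)
    rw [_root_.map_mul, sign_finRotate, Equiv.Perm.sign_extendDomain, sign_revPerm n] at h
    have hexp : (n+1) * ((n+1) - 1) / 2 = n * (n-1) / 2 + n := Nat.triangle_succ n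
    rw [hexp, pow_add]
    calc Equiv.Perm.sign (Fin.revPerm : Equiv.Perm (Fin (n+1)))
        = Equiv.Perm.sign (Fin.revPerm : Equiv.Perm (Fin (n+1))) * ((-1)^n * (-1)^n) := by
          rw [← pow_add, ← two_mul, pow_mul]; simp
      _ = (-1) ^ (n * (n-1)/2) * (-1)^n := by rw [Nat.add_sub_cancel] at h; rw [← mul_assoc, h]

private lemma revPerm_mul_self (n : ℕ) :
    (Fin.revPerm : Equiv.Perm (Fin n)) * Fin.revPerm = 1 := by
  ext i; simp [Equiv.Perm.mul_apply, Fin.rev_rev]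

private lemma prod_map_swap {m : ℕ} (C : Matrix (Fin m) (Fin m) ℝ) :
    ∀ l : List (Matrix (Fin m) (Fin m) ℝ),
      (l.map fun A => C * A).prod * C = C * (l.map fun A => A * C).prod
  | [] => by simp
  | a :: l => by
    rw [List.map_cons, List.prod_cons, List.map_cons, List.prod_cons,
      mul_assoc, prod_map_swap C l]
    simp only [mul_assoc]

private lemma trace_prod_comm {m n : ℕ} (X : Matrix (Fin m) (Fin m) ℝ) (hX : IsUnit X)
    (W : Fin n → Matrix (Fin m) (Fin m) ℝ) :
    (List.ofFn fun i => W i * X⁻¹).prod.trace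
      = (List.ofFn fun i => X⁻¹ * W i).prod.trace := by
  have hd : IsUnit X.det := (Matrix.isUnit_iff_isUnit_det X).mp hX
  have h1 : X * X⁻¹ = 1 := Matrix.mul_nonsing_inv X hd
  have h2 : X⁻¹ * X = 1 := Matrix.nonsing_inv_mul X hd
  have key := prod_map_swap X⁻¹ (List.ofFn W)
  rw [List.map_ofFn, List.map_ofFn] at key
  have key' : X⁻¹ * (List.ofFn fun i => W i * X⁻¹).prod
      = (List.ofFn fun i => X⁻¹ * W i).prod * X⁻¹ := by
    simpa [Function.comp_def] using key.symm
  calc (List.ofFn fun i => W i * X⁻¹).prod.trace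
      = (X * (X⁻¹ * (List.ofFn fun i => W i * X⁻¹).prod)).trace := by
        rw [← mul_assoc, h1, one_mul]
    _ = (X * ((List.ofFn fun i => X⁻¹ * W i).prod * X⁻¹)).trace := by rw [key']
    _ = (((List.ofFn fun i => X⁻¹ * W i).prod * X⁻¹) * X).trace := Matrix.trace_mul_comm _ _
    _ = (List.ofFn fun i => X⁻¹ * W i).prod.trace := by rw [mul_assoc, h2, mul_one]

/-- Transpose behaviour of the canonical forms:
`φⁿ_{Xᵀ}(V₁ᵀ, …, V_nᵀ) = (−1)^{n(n−1)/2} · φⁿ_X(V₁, …, V_n)`. -/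
theorem phiForm_transpose {m : ℕ} (n : ℕ) (hn : 1 ≤ n)
    (X : Matrix (Fin m) (Fin m) ℝ) (hX : IsUnit X)
    (Vs : Fin n → Matrix (Fin m) (Fin m) ℝ) :
    phiForm n X.transpose (fun i => (Vs i).transpose) =
      (-1 : ℝ) ^ (n * (n - 1) / 2) * phiForm n X Vs := by
  classical
  have key : ∀ τ : Equiv.Perm (Fin n),
      (List.ofFn fun i => (X.transpose)⁻¹ * (Vs (τ i)).transpose).prod.trace
        = (List.ofFn fun i => X⁻¹ * Vs ((τ * (Fin.revPerm : Equiv.Perm (Fin n))) i)).prod.trace := by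
    intro τ
    have h1 : (fun i => (X.transpose)⁻¹ * (Vs (τ i)).transpose)
        = fun i => (Vs (τ i) * X⁻¹).transpose := by
      funext i
      rw [← Matrix.transpose_nonsing_inv, ← Matrix.transpose_mul]
    rw [h1]
    have h2 : (List.ofFn fun i => (Vs (τ i) * X⁻¹).transpose)
        = ((List.ofFn fun i => Vs (τ i) * X⁻¹).map Matrix.transpose) := by
      rw [List.map_ofFn]; rfl
    have h3 : ((List.ofFn fun i => Vs (τ i) * X⁻¹).map Matrix.transpose).prod
        = ((List.ofFn fun i => Vs (τ i) * X⁻¹).reverse.prod).transpose := by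
      rw [Matrix.transpose_list_prod, List.map_reverse, List.reverse_reverse]
    rw [h2, h3, Matrix.trace_transpose, ofFn_reverse,
      trace_prod_comm X hX (fun i => Vs (τ (Fin.rev i)))]
    congr 1
  unfold phiForm
  simp only [key]
  have hms : ((-1 : ℝ) ^ (n * (n - 1) / 2) *
      ∑ σ : Equiv.Perm (Fin n), ((Equiv.Perm.sign σ : ℤ) : ℝ) *
        (List.ofFn fun i => X⁻¹ * Vs (σ i)).prod.trace)
      = ∑ σ : Equiv.Perm (Fin n), (-1 : ℝ) ^ (n * (n - 1) / 2) *
        (((Equiv.Perm.sign σ : ℤ) : ℝ) *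
          (List.ofFn fun i => X⁻¹ * Vs (σ i)).prod.trace) := Finset.mul_sum _ _ _
  rw [hms]
  refine Fintype.sum_equiv (Equiv.mulRight (Fin.revPerm : Equiv.Perm (Fin n))) _ _ fun σ => ?_
  simp only [Equiv.coe_mulRight]
  rw [_root_.map_mul, sign_revPerm]
  generalize (List.ofFn fun i => X⁻¹ * Vs ((σ * (Fin.revPerm : Equiv.Perm (Fin n))) i)).prod.trace = t
  have h11 : (-1:ℝ)^(n*(n-1)/2) * (-1)^(n*(n-1)/2) = 1 := by
    rw [← pow_add, ← two_mul, pow_mul]; norm_num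
  have hcast : (((Equiv.Perm.sign σ * (-1) ^ (n * (n - 1) / 2) : ℤˣ) : ℤ) : ℝ)
      = ((Equiv.Perm.sign σ : ℤ) : ℝ) * (-1:ℝ)^(n*(n-1)/2) := by
    push_cast [Units.val_mul, Units.val_pow_eq_pow_val]
    norm_num
  rw [hcast]
  calc ((Equiv.Perm.sign σ : ℤ) : ℝ) * t
      = ((-1:ℝ)^(n*(n-1)/2) * (-1)^(n*(n-1)/2)) * (((Equiv.Perm.sign σ : ℤ) : ℝ) * t) := by
        rw [h11, one_mul]
    _ = (-1:ℝ)^(n*(n-1)/2) * (((Equiv.Perm.sign σ : ℤ) : ℝ) * (-1:ℝ)^(n*(n-1)/2) * t) := by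
        ring
end

section
/- Let n ≥ 3 be odd, let X be an invertible real m×m matrix, let V₁, …, V_n be real m×m matrices, and let c₁, …, c_n ∈ ℝ. Then φⁿ_X(V₁ + c₁·X, …, V_n + c_n·X) = φⁿ_X(V₁, …, V_n). (Pointwise form of the projective invariance ωⁿ_{λX} = ωⁿ_X of the canonical forms of degree n > 1.) -/
open Matrix in
-- swap adjacent entries in a list when the left one is 1: product unchanged
lemma prod_set_swap {M : Type*} [Monoid M] :
    ∀ (l : List M) (j : ℕ) (hj : j + 1 < l.length),
      l[j]'(Nat.lt_of_succ_lt hj) = 1 →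
      ((l.set j (l[j+1]'hj)).set (j+1) 1).prod = l.prod
  | [], j, hj, _ => by simp at hj
  | [a], 0, hj, _ => by simp at hj
  | a :: b :: t, 0, hj, h1 => by
    simp only [List.getElem_cons_zero] at h1
    subst h1
    simp [mul_assoc]
  | a :: t, j+1, hj, h1 => by
    have hj' : j + 1 < t.length := by simpa using hj
    have h1' : t[j]'(Nat.lt_of_succ_lt hj') = 1 := h1
    have ih := prod_set_swap t j hj' h1'
    simp only [List.getElem_cons_succ, List.set_cons_succ, List.prod_cons]
    rw [ih]

lemma ofFn_swap_eq_set {α : Type*} {n : ℕ} [NeZero n] (f : Fin n → α) (p : Fin n)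
    (hp : p.val + 1 < n) :
    List.ofFn (fun i => f (Equiv.swap p (p+1) i)) =
      ((List.ofFn f).set p.val (f (p+1))).set (p.val+1) (f p) := by
  have h1v : ((1 : Fin n) : ℕ) = 1 := by
    rw [Fin.val_one']
    exact Nat.mod_eq_of_lt (by omega)
  have hp1 : ((p + 1 : Fin n) : ℕ) = p.val + 1 := by
    rw [Fin.val_add, h1v, Nat.mod_eq_of_lt hp]
  apply List.ext_getElem
  · simp
  · intro i h1 h2
    simp only [List.getElem_ofFn, List.getElem_set]
    have hin : i < n := by simpa using h1
    by_cases h : i = p.val + 1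
    · rw [if_pos h.symm]
      have e : (⟨i, hin⟩ : Fin n) = p + 1 := Fin.ext (by simp [h, hp1])
      have key : Equiv.swap p (p+1) (⟨i, hin⟩ : Fin n) = p := by
        rw [e]; exact Equiv.swap_apply_right _ _
      exact congrArg f key
    · rw [if_neg (fun hh => h hh.symm)]
      by_cases h' : i = p.val
      · rw [if_pos h'.symm]
        have e : (⟨i, hin⟩ : Fin n) = p := Fin.ext (by simp [h'])
        have key : Equiv.swap p (p+1) (⟨i, hin⟩ : Fin n) = p + 1 := by
          rw [e]; exact Equiv.swap_apply_left _ _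
        exact congrArg f key
      · rw [if_neg (fun hh => h' hh.symm)]
        have hne1 : (⟨i, hin⟩ : Fin n) ≠ p := fun hh => h' (by simpa [Fin.ext_iff] using hh)
        have hne2 : (⟨i, hin⟩ : Fin n) ≠ p + 1 := fun hh =>
          h (by simpa [Fin.ext_iff, hp1] using hh)
        exact congrArg f (Equiv.swap_apply_of_ne_of_ne hne1 hne2)

lemma trace_ofFn_swap_last {m r : ℕ} (f : Fin (r+2) → Matrix (Fin m) (Fin m) ℝ)
    (hp : f (Fin.last (r+1)) = 1) :
    ((List.ofFn fun i => f (Equiv.swap (Fin.last (r+1)) 0 i)).prod).trace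
      = ((List.ofFn f).prod).trace := by
  set s := Equiv.swap (Fin.last (r+1)) (0 : Fin (r+2)) with hs
  have hmid : ∀ i : Fin r, s (Fin.succ (Fin.castSucc i)) = Fin.succ (Fin.castSucc i) := by
    intro i
    apply Equiv.swap_apply_of_ne_of_ne
    · intro h
      have := congrArg Fin.val h
      simp [Fin.last] at this
      omega
    · exact Fin.succ_ne_zero _
  rw [List.ofFn_succ, List.ofFn_succ']
  rw [List.ofFn_succ (f := f), List.ofFn_succ' (f := fun i => f (Fin.succ i))]
  simp only [hmid, Fin.succ_last, Equiv.swap_apply_left, Equiv.swap_apply_right, hs]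
  rw [List.prod_cons, List.prod_cons, List.prod_concat, List.prod_concat, hp]
  rw [one_mul, mul_one, Matrix.trace_mul_comm]
  exact congrArg Matrix.trace (congrArg (f 0 * ·) (congrArg List.prod
    (congrArg List.ofFn (funext fun i => congrArg f (hmid i)))))

open Matrix in
lemma trace_ofFn_swap {m n : ℕ} [NeZero n] (hn : 2 ≤ n) (f : Fin n → Matrix (Fin m) (Fin m) ℝ)
    (p : Fin n) (hp : f p = 1) :
    ((List.ofFn fun i => f (Equiv.swap p (p+1) i)).prod).trace
      = ((List.ofFn f).prod).trace := by

  by_cases hlt : p.val + 1 < n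
  · rw [ofFn_swap_eq_set f p hlt]
    have hv : ((p+1 : Fin n) : ℕ) = p.val + 1 := by
      rw [Fin.val_add, Fin.val_one', Nat.mod_eq_of_lt (show 1 < n by omega),
        Nat.mod_eq_of_lt hlt]
    have e1 : (List.ofFn f)[p.val + 1]'(by simpa using hlt) = f (p+1) := by
      rw [List.getElem_ofFn]
      exact congrArg f (Fin.ext (by simp [hv]))
    have e0 : (List.ofFn f)[p.val]'(by simp only [List.length_ofFn]; omega) = 1 := by
      rw [List.getElem_ofFn]
      convert hp using 2
    rw [hp, ← e1]
    exact congrArg Matrix.trace (prod_set_swap _ _ (by simpa using hlt) e0)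
  · -- p is the last element
    obtain ⟨r, rfl⟩ : ∃ r, n = r + 2 := ⟨n - 2, by omega⟩
    have hpl : p = Fin.last (r+1) := by
      apply Fin.ext
      have := p.isLt
      simp only [Fin.val_last]
      omega
    have hp1 : p + 1 = 0 := by
      rw [hpl]
      exact Fin.last_add_one _
    rw [hp1, hpl]
    exact trace_ofFn_swap_last f (hpl ▸ hp)

open Matrix in
lemma vanish {m : ℕ} {n : ℕ} [NeZero n] (hn : 2 ≤ n) (w : Fin n → Matrix (Fin m) (Fin m) ℝ)
    (k : Fin n) (hw : w k = 1) :
    ∑ σ : Equiv.Perm (Fin n), ((Equiv.Perm.sign σ : ℤ) : ℝ) *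
      ((List.ofFn fun i => w (σ i)).prod).trace = 0 := by
  have hne : ∀ p : Fin n, p ≠ p + 1 := by
    intro p h
    have h0 : p + 0 = p + 1 := by simpa using h
    have h01 : (0 : Fin n) = 1 := by exact add_left_cancel h0
    have hv := congrArg Fin.val h01
    rw [Fin.val_zero, Fin.val_one'] at hv
    have := Nat.mod_eq_of_lt (show 1 < n by omega)
    omega
  set T : Equiv.Perm (Fin n) ≃ Equiv.Perm (Fin n) :=
    { toFun := fun σ => σ * Equiv.swap (σ⁻¹ k) (σ⁻¹ k + 1)
      invFun := fun τ => τ * Equiv.swap (τ⁻¹ k - 1) (τ⁻¹ k)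
      left_inv := by
        intro σ
        show σ * Equiv.swap (σ⁻¹ k) (σ⁻¹ k + 1) *
            Equiv.swap ((σ * Equiv.swap (σ⁻¹ k) (σ⁻¹ k + 1))⁻¹ k - 1)
              ((σ * Equiv.swap (σ⁻¹ k) (σ⁻¹ k + 1))⁻¹ k) = σ
        have h1 : (σ * Equiv.swap (σ⁻¹ k) (σ⁻¹ k + 1))⁻¹ k = σ⁻¹ k + 1 := by
          simp [_root_.mul_inv_rev, Equiv.Perm.mul_apply, Equiv.swap_inv, Equiv.swap_apply_left]
        rw [h1, add_sub_cancel_right, mul_assoc, Equiv.swap_mul_self, mul_one]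
      right_inv := by
        intro τ
        show τ * Equiv.swap (τ⁻¹ k - 1) (τ⁻¹ k) *
            Equiv.swap ((τ * Equiv.swap (τ⁻¹ k - 1) (τ⁻¹ k))⁻¹ k)
              ((τ * Equiv.swap (τ⁻¹ k - 1) (τ⁻¹ k))⁻¹ k + 1) = τ
        have h1 : (τ * Equiv.swap (τ⁻¹ k - 1) (τ⁻¹ k))⁻¹ k = τ⁻¹ k - 1 := by
          simp [_root_.mul_inv_rev, Equiv.Perm.mul_apply, Equiv.swap_inv, Equiv.swap_apply_right]
        rw [h1, sub_add_cancel, mul_assoc, Equiv.swap_mul_self, mul_one] } with hT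
  set F : Equiv.Perm (Fin n) → ℝ := fun σ => ((Equiv.Perm.sign σ : ℤ) : ℝ) *
      ((List.ofFn fun i => w (σ i)).prod).trace with hF
  have hstep : ∀ σ, F (T σ) = - F σ := by
    intro σ
    have hsign : ((Equiv.Perm.sign (T σ) : ℤ) : ℝ) = -((Equiv.Perm.sign σ : ℤ) : ℝ) := by
      have : Equiv.Perm.sign (T σ) = Equiv.Perm.sign σ * Equiv.Perm.sign (Equiv.swap (σ⁻¹ k) (σ⁻¹ k + 1)) := by
        simp [hT, Equiv.Perm.sign_mul]
      rw [this, Equiv.Perm.sign_swap (hne _)]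
      push_cast
      ring
    have htr : ((List.ofFn fun i => w (T σ i)).prod).trace
        = ((List.ofFn fun i => w (σ i)).prod).trace := by
      have : (fun i => w (T σ i)) = fun i => (fun j => w (σ j)) (Equiv.swap (σ⁻¹ k) (σ⁻¹ k + 1) i) := by
        funext i
        simp [hT, Equiv.Perm.mul_apply]
      rw [this]
      exact trace_ofFn_swap hn (fun j => w (σ j)) (σ⁻¹ k) (by simp [hw])
    rw [hF]
    simp only []
    rw [hsign, htr]
    ring
  have hsum : ∑ σ, F σ = ∑ σ, F (T σ) := (Equiv.sum_comp T F).symm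
  have : ∑ σ, F σ = - ∑ σ, F σ := by
    conv_lhs => rw [hsum]
    simp only [hstep, Finset.sum_neg_distrib]
  linarith

open Matrix in
noncomputable def Fmul (m n : ℕ) :
    MultilinearMap ℝ (fun _ : Fin n => Matrix (Fin m) (Fin m) ℝ) ℝ :=
  ∑ σ : Equiv.Perm (Fin n), ((Equiv.Perm.sign σ : ℤ) : ℝ) •
    (((Matrix.traceLinearMap (Fin m) ℝ ℝ).compMultilinearMap
      (MultilinearMap.mkPiAlgebraFin ℝ n (Matrix (Fin m) (Fin m) ℝ))).domDomCongr σ)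

lemma Fmul_apply (m n : ℕ) (v : Fin n → Matrix (Fin m) (Fin m) ℝ) :
    Fmul m n v = ∑ σ : Equiv.Perm (Fin n), ((Equiv.Perm.sign σ : ℤ) : ℝ) *
      ((List.ofFn fun i => v (σ i)).prod).trace := by
  simp [Fmul, MultilinearMap.sum_apply, MultilinearMap.smul_apply,
    MultilinearMap.domDomCongr_apply, LinearMap.compMultilinearMap_apply,
    MultilinearMap.mkPiAlgebraFin_apply, smul_eq_mul]

/-- Pointwise form of the projective invariance `ωⁿ_{λX} = ωⁿ_X` of the
canonical forms of odd degree `n ≥ 3`. -/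
theorem phiForm_projective_invariance {m : ℕ} (n : ℕ) (hn : 3 ≤ n)
    (hodd : Odd n)
    (X : Matrix (Fin m) (Fin m) ℝ) (hX : IsUnit X)
    (Vs : Fin n → Matrix (Fin m) (Fin m) ℝ) (c : Fin n → ℝ) :
    phiForm n X (fun i => Vs i + c i • X) = phiForm n X Vs := by
  haveI : NeZero n := ⟨by omega⟩
  have hXinv : X⁻¹ * X = 1 :=
    Matrix.nonsing_inv_mul X ((Matrix.isUnit_iff_isUnit_det X).mp hX)
  have key : ∀ Ws : Fin n → Matrix (Fin m) (Fin m) ℝ,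
      phiForm n X Ws = Fmul m n (fun i => X⁻¹ * Ws i) := by
    intro Ws
    rw [Fmul_apply]
    rfl
  rw [key, key]
  have hsplit : (fun i => X⁻¹ * (Vs i + c i • X)) =
      (fun i => X⁻¹ * Vs i) + (fun i => c i • (1 : Matrix (Fin m) (Fin m) ℝ)) := by
    funext i
    simp only [Pi.add_apply, mul_add, Matrix.mul_smul, hXinv]
  rw [hsplit, MultilinearMap.map_add_univ]
  rw [Finset.sum_eq_single Finset.univ]
  · rw [Finset.piecewise_univ]
  · intro s _ hs
    obtain ⟨k, hk⟩ : ∃ k, k ∉ s := by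
      by_contra h
      push_neg at h
      exact hs (Finset.eq_univ_iff_forall.mpr h)
    set v := s.piecewise (fun i => X⁻¹ * Vs i) (fun i => c i • (1 : Matrix (Fin m) (Fin m) ℝ))
      with hv
    have hvk : v k = c k • (1 : Matrix (Fin m) (Fin m) ℝ) :=
      Finset.piecewise_eq_of_notMem _ _ _ hk
    have step : Fmul m n v = c k • Fmul m n (Function.update v k 1) := by
      conv_lhs => rw [← Function.update_eq_self k v, hvk]
      rw [MultilinearMap.map_update_smul]
    rw [step, Fmul_apply]
    rw [vanish (by omega) _ k (Function.update_self k 1 v)]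
    simp
  · intro h
    exact absurd (Finset.mem_univ _) h
end
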